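/- arXiv:2306.02065 — 4 statements merged into one kernel-verified Lean document; each statement's English description precedes it below -/
import Mathlib

section
/- Let G be a finite simple undirected graph whose girth is at least 2·χ(G) − 1, where χ(G) is the chromatic number of G. Then G is sc-orientable. -/
/-- An orientation of a simple graph `G`: each edge `{u,v}` receives exactly one
direction, yielding a directed graph with arc relation `arc`. -/
structure EdgeOrientation {V : Type*} (G : SimpleGraph V) where
  arc : V → V → Prop
  adj_iff : ∀ u v, G.Adj u v ↔ (arc u v ∨ arc v u)
  asymm : ∀ u v, arc u v → ¬ arc v u

/-- `p` is a directed path in the digraph `D`: a nonempty list of pairwise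
distinct vertices in which consecutive vertices are joined by arcs of `D`. -/
def IsDipath {V : Type*} (D : V → V → Prop) (p : List V) : Prop :=
  p ≠ [] ∧ p.Chain' D ∧ p.Nodup

/-- `p` is a directed path from `s` to `t` in the digraph `D`. -/
def IsDipathFromTo {V : Type*} (D : V → V → Prop) (s t : V) (p : List V) : Prop :=
  IsDipath D p ∧ p.head? = some s ∧ p.getLast? = some t

/-- A digraph `D` is singly connected if for every ordered pair `(s,t)` there is
at most one directed path from `s` to `t`. -/
def SinglyConnected {V : Type*} (D : V → V → Prop) : Prop :=
  ∀ s t p q, IsDipathFromTo D s t p → IsDipathFromTo D s t q → p = q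

/-- An orientation is an sc-orientation if the resulting digraph is singly connected. -/
def IsSCOrientation {V : Type*} {G : SimpleGraph V} (σ : EdgeOrientation G) : Prop :=
  SinglyConnected σ.arc

/-- A graph is sc-orientable if it admits an sc-orientation. -/
def SCOrientable {V : Type*} (G : SimpleGraph V) : Prop :=
  ∃ σ : EdgeOrientation G, IsSCOrientation σ

open SimpleGraph Walk

section Aux

variable {V : Type*} {G : SimpleGraph V}

lemma aux_length_pos {s t : V} (hst : s ≠ t) (p : G.Walk s t) : 0 < p.length := by
  cases p with
  | nil => exact absurd rfl hst
  | cons h q => simp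

lemma aux_length_one_of_start_edge {s t : V} {p : G.Walk s t} (hp : p.IsPath)
    (he : s(s, t) ∈ p.edges) : p.length = 1 := by
  cases p with
  | nil => simp at he
  | cons h q =>
    rename_i b
    rw [Walk.edges_cons, List.mem_cons] at he
    rcases he with he | he
    · have hb : t = b := by
        rcases Sym2.eq_iff.mp he with ⟨-, h2⟩ | ⟨h1, -⟩
        · exact h2
        · exact absurd h1 h.ne
      subst hb
      have : q = Walk.nil := (Walk.isPath_iff_eq_nil (p := q)).mp hp.of_cons
      subst this
      simp
    · have hs : s ∈ q.support := q.fst_mem_support_of_mem_edges he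
      have := (Walk.cons_isPath_iff h q).mp hp
      exact absurd hs this.2

lemma aux_eq_of_length_one {s t : V} (p q : G.Walk s t) (hp : p.length = 1)
    (hq : q.length = 1) : p = q := by
  cases p with
  | nil => simp at hp
  | cons h p' =>
    cases q with
    | nil => simp at hq
    | cons h' q' =>
      simp only [Walk.length_cons, Nat.add_left_inj] at hp hq
      cases p' with
      | nil =>
        cases q' with
        | nil => rfl
        | cons h'' q'' => simp at hq
      | cons h'' p'' => simp at hp

lemma aux_cycle_of_two_paths :
    ∀ (n : ℕ) {s t : V} (p q : G.Walk s t), p.length + q.length ≤ n →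
      p.IsPath → q.IsPath → p ≠ q →
      ∃ (u : V) (c : G.Walk u u), c.IsCycle ∧ c.length ≤ p.length + q.length := by
  intro n
  induction n with
  | zero =>
    intro s t p q hlen hp hq hne
    cases p with
    | nil =>
      rw [Walk.isPath_iff_eq_nil] at hq
      exact absurd hq.symm hne
    | cons h p' => simp at hlen
  | succ n IH =>
    intro s t p q hlen hp hq hne
    classical
    by_cases hst : s = t
    · subst hst
      rw [Walk.isPath_iff_eq_nil] at hp hq
      exact absurd (hp.trans hq.symm) hne
    by_cases hmid : ∃ w, w ∈ p.support ∧ w ∈ q.support ∧ w ≠ s ∧ w ≠ t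
    · obtain ⟨w, hwp, hwq, hws, hwt⟩ := hmid
      have hpspec := p.take_spec hwp
      have hqspec := q.take_spec hwq
      have hplen : (p.takeUntil w hwp).length + (p.dropUntil w hwp).length = p.length := by
        rw [← Walk.length_append, hpspec]
      have hqlen : (q.takeUntil w hwq).length + (q.dropUntil w hwq).length = q.length := by
        rw [← Walk.length_append, hqspec]
      have hp1 : (p.takeUntil w hwp).IsPath := hp.takeUntil hwp
      have hp2 : (p.dropUntil w hwp).IsPath := hp.dropUntil hwp
      have hq1 : (q.takeUntil w hwq).IsPath := hq.takeUntil hwq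
      have hq2 : (q.dropUntil w hwq).IsPath := hq.dropUntil hwq
      have h1pos : 0 < (p.takeUntil w hwp).length := aux_length_pos (Ne.symm hws) _
      have h2pos : 0 < (p.dropUntil w hwp).length := aux_length_pos hwt _
      have h3pos : 0 < (q.takeUntil w hwq).length := aux_length_pos (Ne.symm hws) _
      have h4pos : 0 < (q.dropUntil w hwq).length := aux_length_pos hwt _
      by_cases h1 : p.takeUntil w hwp = q.takeUntil w hwq
      · have h2 : p.dropUntil w hwp ≠ q.dropUntil w hwq := by
          intro h2
          apply hne
          rw [← hpspec, ← hqspec, h1, h2]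
        obtain ⟨u, c, hc, hcl⟩ :=
          IH (p.dropUntil w hwp) (q.dropUntil w hwq) (by omega) hp2 hq2 h2
        exact ⟨u, c, hc, by omega⟩
      · obtain ⟨u, c, hc, hcl⟩ :=
          IH (p.takeUntil w hwp) (q.takeUntil w hwq) (by omega) hp1 hq1 h1
        exact ⟨u, c, hc, by omega⟩
    · push_neg at hmid
      have hps : p.support.Nodup := hp.support_nodup
      have hqs : q.support.Nodup := hq.support_nodup
      have hppos := aux_length_pos hst p
      have hqpos := aux_length_pos hst q
      have hne1 : ¬ (p.length = 1 ∧ q.length = 1) := by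
        rintro ⟨h1, h2⟩
        exact hne (aux_eq_of_length_one p q h1 h2)
      have hedis : ∀ e ∈ p.edges, e ∉ q.edges := by
        intro e hep heq
        induction e using Sym2.ind with
        | _ x y =>
        have hx : x ∈ p.support := p.fst_mem_support_of_mem_edges hep
        have hy : y ∈ p.support := p.snd_mem_support_of_mem_edges hep
        have hx' : x ∈ q.support := q.fst_mem_support_of_mem_edges heq
        have hy' : y ∈ q.support := q.snd_mem_support_of_mem_edges heq
        have hxy : x ≠ y := (G.mem_edgeSet.mp (p.edges_subset_edgeSet hep)).ne
        have hxst : x = s ∨ x = t := by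
          by_cases hxs : x = s
          · exact Or.inl hxs
          · exact Or.inr (hmid x hx hx' hxs)
        have hyst : y = s ∨ y = t := by
          by_cases hys : y = s
          · exact Or.inl hys
          · exact Or.inr (hmid y hy hy' hys)
        have hest : s(x, y) = s(s, t) := by
          rcases hxst with rfl | rfl <;> rcases hyst with rfl | rfl
          · exact absurd rfl hxy
          · rfl
          · exact Sym2.eq_swap
          · exact absurd rfl hxy
        rw [hest] at hep heq
        exact hne1 ⟨aux_length_one_of_start_edge hp hep, aux_length_one_of_start_edge hq heq⟩
      refine ⟨s, p.append q.reverse, ?_, le_of_eq (by simp)⟩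
      rw [Walk.isCycle_def]
      refine ⟨⟨?_⟩, ?_, ?_⟩
      · rw [Walk.edges_append, Walk.edges_reverse]
        refine List.Nodup.append hp.isTrail.edges_nodup
          (List.nodup_reverse.mpr hq.isTrail.edges_nodup) ?_
        intro e hep heq
        exact hedis e hep (List.mem_reverse.mp heq)
      · intro hnil
        have hzero := congrArg Walk.length hnil
        simp only [Walk.length_append, Walk.length_reverse, Walk.length_nil] at hzero
        omega
      · rw [Walk.tail_support_append]
        refine List.Nodup.append hps.tail (hq.reverse.support_nodup.tail) ?_
        intro x hx1 hx2
        have hxp : x ∈ p.support := List.mem_of_mem_tail hx1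
        have hxq : x ∈ q.support := by
          have := List.mem_of_mem_tail hx2
          rw [Walk.support_reverse, List.mem_reverse] at this
          exact this
        have hxs : x ≠ s := by
          rintro rfl
          have h1 : p.support = x :: p.support.tail := p.support_eq_cons
          have h2 := hps
          rw [h1] at h2
          exact (List.nodup_cons.mp h2).1 hx1
        have hxt : x ≠ t := by
          rintro rfl
          have h1 : q.reverse.support = x :: q.reverse.support.tail :=
            q.reverse.support_eq_cons
          have h2 := hq.reverse.support_nodup
          rw [h1] at h2
          exact (List.nodup_cons.mp h2).1 hx2
        exact hxt (hmid x hxp hxq hxs)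

lemma aux_walk_of_chain :
    ∀ (l : List V), l.Chain' G.Adj → ∀ s t : V, l.head? = some s → l.getLast? = some t →
      ∃ w : G.Walk s t, w.support = l := by
  intro l
  induction l with
  | nil => intro _ s t hh _; simp at hh
  | cons x l IH =>
    intro hchain s t hh hl
    cases l with
    | nil =>
      have h2 : x = t := by simpa using hl
      subst h2
      have h1 : x = s := by simpa using hh
      subst h1
      exact ⟨Walk.nil, by simp⟩
    | cons y l' =>
      obtain ⟨hadj, hchain'⟩ := List.isChain_cons_cons.mp hchain
      have hh' : x = s := by simpa using hh
      subst hh'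
      have hl' : (y :: l').getLast? = some t := by
        rw [List.getLast?_cons_cons] at hl
        exact hl
      obtain ⟨w, hw⟩ := IH hchain' y t rfl hl'
      exact ⟨Walk.cons hadj w, by simp [hw]⟩

end Aux

/-- If the girth of a finite graph `G` is at least `2·χ(G) − 1`,
then `G` is sc-orientable.  (Girth is `⊤` for acyclic graphs.) -/
theorem scOrientable_of_girth_ge_two_mul_chromaticNumber_sub_one
    {V : Type*} [Fintype V] (G : SimpleGraph V)
    (h : 2 * G.chromaticNumber - 1 ≤ G.egirth) :
    SCOrientable G := by
  classical
  obtain ⟨c⟩ := G.colorable_chromaticNumber_of_fintype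
  set n := G.chromaticNumber.toNat with hn
  refine ⟨⟨fun u v => G.Adj u v ∧ c u < c v, fun u v => ?_, fun u v h1 h2 => ?_⟩, ?_⟩
  · constructor
    · intro hadj
      rcases lt_or_gt_of_ne (c.valid hadj) with hlt | hgt
      · exact Or.inl ⟨hadj, hlt⟩
      · exact Or.inr ⟨hadj.symm, hgt⟩
    · rintro (⟨ha, -⟩ | ⟨ha, -⟩)
      · exact ha
      · exact ha.symm
  · exact absurd h2.2 (not_lt.mpr h1.2.le)
  · intro s t p q hp hq
    by_contra hne
    obtain ⟨⟨hpne, hpchain, hpnodup⟩, hphead, hplast⟩ := hp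
    obtain ⟨⟨hqne, hqchain, hqnodup⟩, hqhead, hqlast⟩ := hq
    have hpadj : p.Chain' G.Adj := hpchain.imp (fun _ _ hab => hab.1)
    have hqadj : q.Chain' G.Adj := hqchain.imp (fun _ _ hab => hab.1)
    obtain ⟨wp, hwp⟩ := aux_walk_of_chain p hpadj s t hphead hplast
    obtain ⟨wq, hwq⟩ := aux_walk_of_chain q hqadj s t hqhead hqlast
    have hwp_path : wp.IsPath := Walk.IsPath.mk' (hwp ▸ hpnodup)
    have hwq_path : wq.IsPath := Walk.IsPath.mk' (hwq ▸ hqnodup)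
    have hwne : wp ≠ wq := by
      intro hEq
      apply hne
      rw [← hwp, ← hwq, hEq]
    obtain ⟨u, cyc, hcyc, hcl⟩ :=
      aux_cycle_of_two_paths (wp.length + wq.length) wp wq le_rfl hwp_path hwq_path hwne
    -- length bounds via the coloring
    have hpb : p.length ≤ n := by
      have hc : (p.map c).Chain' (· < ·) :=
        (List.isChain_map c).mpr (hpchain.imp (fun _ _ hab => hab.2))
      have hnd : (p.map c).Nodup :=
        (List.isChain_iff_pairwise.mp hc).imp ne_of_lt
      calc p.length = (p.map c).length := (List.length_map _).symm
        _ ≤ Fintype.card (Fin n) := hnd.length_le_card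
        _ = n := Fintype.card_fin n
    have hqb : q.length ≤ n := by
      have hc : (q.map c).Chain' (· < ·) :=
        (List.isChain_map c).mpr (hqchain.imp (fun _ _ hab => hab.2))
      have hnd : (q.map c).Nodup :=
        (List.isChain_iff_pairwise.mp hc).imp ne_of_lt
      calc q.length = (q.map c).length := (List.length_map _).symm
        _ ≤ Fintype.card (Fin n) := hnd.length_le_card
        _ = n := Fintype.card_fin n
    have hwpl : wp.length + 1 = p.length := by
      have := congrArg List.length hwp
      rwa [Walk.length_support] at this
    have hwql : wq.length + 1 = q.length := by
      have := congrArg List.length hwq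
      rwa [Walk.length_support] at this
    -- girth bound
    have hg : G.egirth ≤ (cyc.length : ℕ∞) := by
      rw [SimpleGraph.egirth]
      refine iInf_le_of_le u (iInf_le_of_le cyc ?_)
      exact iInf_le _ hcyc
    have hne_top : G.chromaticNumber ≠ ⊤ :=
      SimpleGraph.chromaticNumber_ne_top_iff_exists.mpr
        ⟨Fintype.card V, G.colorable_of_fintype⟩
    have hchi : G.chromaticNumber = (n : ℕ∞) := (ENat.coe_toNat hne_top).symm
    have hn1 : 1 ≤ n := by
      by_contra hcon
      have hzero : G.chromaticNumber = 0 := by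
        rw [hchi]
        have : n = 0 := by omega
        simp [this]
      exact (G.isEmpty_of_chromaticNumber_eq_zero hzero).false s
    have h2 : (2 * G.chromaticNumber - 1 : ℕ∞) ≤ (cyc.length : ℕ∞) := le_trans h hg
    rw [hchi] at h2
    have hcast : ((2 * n - 1 : ℕ) : ℕ∞) = 2 * (n : ℕ∞) - 1 := by
      rw [ENat.coe_sub, Nat.cast_mul, Nat.cast_ofNat, Nat.cast_one]
    rw [← hcast] at h2
    have hfin : (2 * n - 1 : ℕ) ≤ cyc.length := by exact_mod_cast h2
    omega
end

section
/- Every near-bipartite finite simple undirected graph with girth at least 5 is sc-orientable. That is, if V(G) can be partitioned into sets I and F such that I is an independent set and the induced subgraph G[F] is a forest, and every cycle of G has length at least 5, then G is sc-orientable. -/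
open SimpleGraph in
/-- Any acyclic simple graph admits a proper 2-coloring. -/
lemma forest_bicoloring {V : Type*} {H : SimpleGraph V} (hac : H.IsAcyclic) :
    ∃ c : V → Bool, ∀ u v, H.Adj u v → c u ≠ c v := by
  classical
  have aux : ∀ {u v r : V}, H.Adj u v → ∀ (p : H.Walk u r) (q : H.Walk v r), p.IsPath → q.IsPath →
      p.length + 1 = q.length ∨ q.length + 1 = p.length := by
    intro u v r h p q hp hq
    by_cases hv : v ∈ p.support
    · have hdropP : (p.dropUntil v hv).IsPath := hp.dropUntil hv
      have hEq : (⟨p.dropUntil v hv, hdropP⟩ : H.Path v r) = ⟨q, hq⟩ := hac.path_unique _ _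
      have hlen2 : (p.dropUntil v hv).length = q.length := by
        have := congrArg (fun (x : H.Path v r) => x.1.length) hEq
        simpa using this
      have htakeP : (p.takeUntil v hv).IsPath := hp.takeUntil hv
      have hEq2 : (⟨p.takeUntil v hv, htakeP⟩ : H.Path u v) = Path.singleton h :=
        hac.path_unique _ _
      have hlen1 : (p.takeUntil v hv).length = 1 := by
        have := congrArg (fun (x : H.Path u v) => x.1.length) hEq2
        simpa [Path.singleton] using this
      have hspec := SimpleGraph.Walk.take_spec p hv
      have hlen := congrArg SimpleGraph.Walk.length hspec
      rw [SimpleGraph.Walk.length_append, hlen1, hlen2] at hlen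
      right
      omega
    · have hcons : (SimpleGraph.Walk.cons h.symm p).IsPath := hp.cons hv
      have hEq : (⟨SimpleGraph.Walk.cons h.symm p, hcons⟩ : H.Path v r) = ⟨q, hq⟩ :=
        hac.path_unique _ _
      have := congrArg (fun (x : H.Path v r) => x.1.length) hEq
      simp only [SimpleGraph.Walk.length_cons] at this
      left
      exact this
  have hreach : ∀ v : V, H.Reachable v (H.connectedComponentMk v).out := by
    intro v
    have : H.connectedComponentMk (H.connectedComponentMk v).out = H.connectedComponentMk v :=
      (H.connectedComponentMk v).out_eq
    exact (SimpleGraph.ConnectedComponent.eq.mp this).symm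
  let pth : ∀ v : V, H.Path v (H.connectedComponentMk v).out := fun v => ((hreach v).some).toPath
  refine ⟨fun v => decide (Odd (pth v).1.length), ?_⟩
  intro u v h hcc
  have hru : (H.connectedComponentMk v).out = (H.connectedComponentMk u).out := by
    have : H.connectedComponentMk v = H.connectedComponentMk u :=
      SimpleGraph.ConnectedComponent.eq.mpr h.symm.reachable
    rw [this]
  have hq : ((pth v).1.copy rfl hru).IsPath := by
    rw [SimpleGraph.Walk.isPath_copy]
    exact (pth v).2
  have hdisj := aux h (pth u).1 ((pth v).1.copy rfl hru) (pth u).2 hq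
  rw [SimpleGraph.Walk.length_copy] at hdisj
  simp only [decide_eq_decide] at hcc
  rcases hdisj with h1 | h1
  · rw [← h1, Nat.odd_add_one] at hcc
    exact iff_not_self hcc
  · rw [← h1, Nat.odd_add_one] at hcc
    exact iff_not_self hcc.symm

/-- Every near-bipartite finite graph with girth at least 5 is sc-orientable:
if `V(G)` partitions into an independent set `I` and a set `F` inducing a
forest, and every cycle of `G` has length at least 5, then `G` is
sc-orientable. -/
theorem scOrientable_of_nearBipartite_of_girth_ge_five
    {V : Type*} [Fintype V] (G : SimpleGraph V) (I F : Set V)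
    (hunion : I ∪ F = Set.univ) (hdisj : Disjoint I F)
    (hindep : ∀ a ∈ I, ∀ b ∈ I, ¬ G.Adj a b)
    (hforest : (SimpleGraph.induce F G).IsAcyclic)
    (hgirth : 5 ≤ G.egirth) :
    SCOrientable G := by
  classical
  obtain ⟨c0, hc0⟩ := forest_bicoloring hforest
  have hmemF : ∀ x : V, x ∉ I → x ∈ F := by
    intro x hx
    have hx2 : x ∈ I ∪ F := by rw [hunion]; exact Set.mem_univ x
    rcases hx2 with h | h
    · exact absurd h hx
    · exact h
  let cc : V → Bool := fun x => if hx : x ∈ F then c0 ⟨x, hx⟩ else false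
  have hcc : ∀ x y, x ∉ I → y ∉ I → G.Adj x y → cc x ≠ cc y := by
    intro x y hx hy hadj
    have hxF := hmemF x hx
    have hyF := hmemF y hy
    have hadj' : (SimpleGraph.induce F G).Adj ⟨x, hxF⟩ ⟨y, hyF⟩ := hadj
    have := hc0 _ _ hadj'
    simpa [cc, hxF, hyF] using this
  set arc : V → V → Prop :=
    fun x y => G.Adj x y ∧ (y ∈ I ∨ (y ∉ I ∧ x ∉ I ∧ cc x = false ∧ cc y = true)) with harc
  have hII : ∀ x y : V, G.Adj x y → x ∈ I → y ∈ I → False :=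
    fun x y h hx hy => hindep x hx y hy h
  set rank : V → ℕ := fun x => if x ∈ I then 2 else if cc x then 1 else 0 with hrankdef
  have hrank_le : ∀ x, rank x ≤ 2 := by
    intro x
    simp only [hrankdef]
    split_ifs <;> omega
  have hrank : ∀ x y, arc x y → rank x < rank y := by
    rintro x y ⟨hadj, hor⟩
    rcases hor with hy | ⟨hy, hx, hcx, hcy⟩
    · have hx : x ∉ I := fun hx => hII x y hadj hx hy
      simp only [hrankdef, if_pos hy, if_neg hx]
      split_ifs <;> omega
    · simp [hrankdef, hx, hy, hcx, hcy]
  have no_self : ∀ x, ¬ arc x x := fun x h => G.irrefl h.1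
  have hcycle5 : ∀ (a : V) (w : G.Walk a a), w.IsCycle → 5 ≤ w.length := by
    intro a w hw
    have h2 := SimpleGraph.le_egirth.mp hgirth a w hw
    exact_mod_cast h2
  have tri : ∀ a b k : V, G.Adj a b → G.Adj b k → G.Adj a k → False := by
    intro a b k hab hbk hak
    have hC : (SimpleGraph.Walk.cons hab (SimpleGraph.Walk.cons hbk
        (SimpleGraph.Walk.cons hak.symm SimpleGraph.Walk.nil))).IsCycle := by
      simp [SimpleGraph.Walk.isCycle_def, SimpleGraph.Walk.isTrail_def,
        hab.ne, hbk.ne, hak.ne, hab.ne', hbk.ne', hak.ne', Sym2.eq_iff]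
    have := hcycle5 a _ hC
    simp [SimpleGraph.Walk.length_cons] at this
  have quad : ∀ a b k d : V, G.Adj a b → G.Adj b k → G.Adj k d → G.Adj d a →
      a ≠ k → b ≠ d → False := by
    intro a b k d hab hbk hkd hda hak hbd
    have hC : (SimpleGraph.Walk.cons hab (SimpleGraph.Walk.cons hbk
        (SimpleGraph.Walk.cons hkd (SimpleGraph.Walk.cons hda SimpleGraph.Walk.nil)))).IsCycle := by
      simp [SimpleGraph.Walk.isCycle_def, SimpleGraph.Walk.isTrail_def,
        hab.ne, hbk.ne, hkd.ne, hda.ne, hab.ne', hbk.ne', hkd.ne', hda.ne',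
        hak, hbd, hak.symm, hbd.symm, Sym2.eq_iff]
    have := hcycle5 a _ hC
    simp [SimpleGraph.Walk.length_cons] at this
  refine ⟨⟨arc, ?_, ?_⟩, ?_⟩
  · -- adj_iff
    intro u v
    constructor
    · intro h
      by_cases hv : v ∈ I
      · exact Or.inl ⟨h, Or.inl hv⟩
      by_cases hu : u ∈ I
      · exact Or.inr ⟨h.symm, Or.inl hu⟩
      have hne := hcc u v hu hv h
      cases hcu : cc u <;> cases hcv : cc v
      · rw [hcu, hcv] at hne; exact absurd rfl hne
      · exact Or.inl ⟨h, Or.inr ⟨hv, hu, hcu, hcv⟩⟩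
      · exact Or.inr ⟨h.symm, Or.inr ⟨hu, hv, hcv, hcu⟩⟩
      · rw [hcu, hcv] at hne; exact absurd rfl hne
    · rintro (⟨h, _⟩ | ⟨h, _⟩)
      · exact h
      · exact h.symm
  · -- asymm
    rintro u v ⟨hadj, h1⟩ ⟨_, h2⟩
    rcases h1 with hv | ⟨hv, hu, hcu, hcv⟩ <;> rcases h2 with hu' | ⟨hu', hv', hcv', hcu'⟩
    · exact hII u v hadj hu' hv
    · exact hv' hv
    · exact hu hu'
    · rw [hcu'] at hcu; exact Bool.noConfusion hcu
  · -- singly connected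
    intro s t p q hp hq
    have shape : ∀ (p : List V), IsDipathFromTo arc s t p →
        (p = [s] ∧ s = t) ∨ (p = [s, t] ∧ arc s t) ∨
        (∃ m, p = [s, m, t] ∧ arc s m ∧ arc m t) := by
      rintro p ⟨⟨hne, hchain, hnodup⟩, hhead, hlast⟩
      rcases p with _ | ⟨a, l⟩
      · exact absurd rfl hne
      have ha : a = s := by simpa using hhead
      subst ha
      rcases l with _ | ⟨b, l⟩
      · left
        refine ⟨rfl, ?_⟩
        simpa using hlast
      rcases l with _ | ⟨d, l⟩
      · right; left
        have hb : b = t := by simpa using hlast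
        subst hb
        have harc : arc a b := by
          rw [List.Chain', List.isChain_cons_cons] at hchain
          exact hchain.1
        exact ⟨rfl, harc⟩
      rcases l with _ | ⟨e, l⟩
      · right; right
        have hd : d = t := by simpa using hlast
        subst hd
        simp only [List.Chain', List.isChain_cons_cons] at hchain
        exact ⟨b, rfl, hchain.1, hchain.2.1⟩
      · exfalso
        simp only [List.Chain', List.isChain_cons_cons] at hchain
        have h1 := hrank _ _ hchain.1
        have h2 := hrank _ _ hchain.2.1
        have h3 := hrank _ _ hchain.2.2.1
        have := hrank_le e
        have := hrank_le a
        omega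
    have hst_ne : ∀ m : V, arc s m → arc m t → s ≠ t := by
      intro m h1 h2 hst
      have := hrank _ _ h1
      have := hrank _ _ h2
      rw [hst] at *
      omega
    rcases shape p hp with ⟨hp1, hst⟩ | ⟨hp1, hps⟩ | ⟨m, hp1, hpm1, hpm2⟩ <;>
      rcases shape q hq with ⟨hq1, hst'⟩ | ⟨hq1, hqs⟩ | ⟨m', hq1, hqm1, hqm2⟩
    · rw [hp1, hq1]
    · exact absurd (hst ▸ hqs) (no_self s)
    · exact absurd hst (hst_ne m' hqm1 hqm2)
    · exact absurd (hst' ▸ hps) (no_self s)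
    · rw [hp1, hq1]
    · exact absurd (tri s m' t hqm1.1 hqm2.1 hps.1) id
    · exact absurd hst' (hst_ne m hpm1 hpm2)
    · exact absurd (tri s m t hpm1.1 hpm2.1 hqs.1) id
    · by_cases hmm : m = m'
      · rw [hp1, hq1, hmm]
      · exact absurd (quad s m t m' hpm1.1 hpm2.1 hqm2.1.symm hqm1.1.symm
          (hst_ne m hpm1 hpm2) hmm) id
end

section
/- A distance hereditary finite simple undirected graph is sc-orientable if and only if it is strongly distance hereditary. -/
/-- `DHOn G s` : the induced subgraph of `G` on the finite vertex set `s` can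
be constructed, starting from a single isolated vertex, by repeatedly adding a
pendant vertex, a true twin, or a false twin. -/
inductive DHOn {V : Type*} [DecidableEq V] (G : SimpleGraph V) : Finset V → Prop
  | single (v : V) : DHOn G {v}
  | pendant {s : Finset V} (u v : V) (hu : u ∈ s) (hv : v ∉ s)
      (hs : DHOn G s) (hN : ∀ x ∈ s, (G.Adj v x ↔ x = u)) :
      DHOn G (insert v s)
  | trueTwin {s : Finset V} (u v : V) (hu : u ∈ s) (hv : v ∉ s)
      (hs : DHOn G s) (hN : ∀ x ∈ s, (G.Adj v x ↔ (G.Adj u x ∨ x = u))) :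
      DHOn G (insert v s)
  | falseTwin {s : Finset V} (u v : V) (hu : u ∈ s) (hv : v ∉ s)
      (hs : DHOn G s) (hN : ∀ x ∈ s, (G.Adj v x ↔ G.Adj u x)) :
      DHOn G (insert v s)

/-- `SDHOn G s` : the induced subgraph of `G` on `s` can be constructed,
starting from a single isolated vertex, by repeatedly adding a pendant vertex,
a true twin of a vertex of degree 1, or a false twin of a vertex whose
neighborhood is an independent set. -/
inductive SDHOn {V : Type*} [DecidableEq V] (G : SimpleGraph V) : Finset V → Prop
  | single (v : V) : SDHOn G {v}
  | pendant {s : Finset V} (u v : V) (hu : u ∈ s) (hv : v ∉ s)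
      (hs : SDHOn G s) (hN : ∀ x ∈ s, (G.Adj v x ↔ x = u)) :
      SDHOn G (insert v s)
  | trueTwin {s : Finset V} (u v : V) (hu : u ∈ s) (hv : v ∉ s)
      (hs : SDHOn G s) (hN : ∀ x ∈ s, (G.Adj v x ↔ (G.Adj u x ∨ x = u)))
      (hdeg : ∃! x, x ∈ s ∧ G.Adj u x) :
      SDHOn G (insert v s)
  | falseTwin {s : Finset V} (u v : V) (hu : u ∈ s) (hv : v ∉ s)
      (hs : SDHOn G s) (hN : ∀ x ∈ s, (G.Adj v x ↔ G.Adj u x))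
      (hind : ∀ x ∈ s, ∀ y ∈ s, G.Adj u x → G.Adj u y → ¬ G.Adj x y) :
      SDHOn G (insert v s)

/-- A finite graph is distance hereditary if it can be built from a single
vertex by adding pendant vertices, true twins and false twins. -/
def DistanceHereditary {V : Type*} [Fintype V] [DecidableEq V]
    (G : SimpleGraph V) : Prop :=
  DHOn G Finset.univ

/-- A finite graph is strongly distance hereditary if it can be built from a
single vertex by adding pendant vertices, true twins of vertices of degree 1,
and false twins of vertices with independent neighborhood. -/
def StronglyDistanceHereditary {V : Type*} [Fintype V] [DecidableEq V]
    (G : SimpleGraph V) : Prop :=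
  SDHOn G Finset.univ

namespace SCAux
variable {V : Type*}

lemma chain'_mono_mem {R S : V → V → Prop} :
    ∀ {p : List V}, (∀ x ∈ p, ∀ y ∈ p, R x y → S x y) → p.Chain' R → p.Chain' S := by
  intro p
  induction p with
  | nil => intro _ _; exact List.isChain_nil
  | cons a l ih =>
    intro h hc
    unfold List.Chain' at hc ⊢
    rw [List.isChain_cons] at hc ⊢
    refine ⟨fun b hb => h a (by simp) b ?_ (hc.1 b hb),
      ih (fun x hx y hy hr => h x (by simp [hx]) y (by simp [hy]) hr) hc.2⟩
    exact List.mem_cons_of_mem _ (List.mem_of_mem_head? hb)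

lemma head_of_no_in {D : V → V → Prop} {v : V} :
    ∀ {p : List V}, (∀ x ∈ p, ¬ D x v) → p.Chain' D → v ∈ p → p.head? = some v := by
  intro p
  induction p with
  | nil => simp
  | cons a l ih =>
    intro hv hc hm
    rcases List.mem_cons.1 hm with h | h
    · simp [h]
    · exfalso
      have hl : l.head? = some v :=
        ih (fun x hx => hv x (List.mem_cons_of_mem _ hx)) (List.isChain_cons.1 hc).2 h
      exact hv a (by simp) ((List.isChain_cons.1 hc).1 v hl)

lemma last_of_no_out {D : V → V → Prop} {v : V} {p : List V} (hv : ∀ x ∈ p, ¬ D v x)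
    (hc : p.Chain' D) (hm : v ∈ p) : p.getLast? = some v := by
  have hc' : p.reverse.Chain' (fun a b => D b a) := by
    unfold List.Chain'; rw [List.isChain_reverse]; exact hc
  have := head_of_no_in (D := fun a b => D b a) (v := v)
    (fun x hx => hv x (by simpa using hx)) hc' (by simpa using hm)
  simpa using this

lemma mem_of_getLast?' {p : List V} {a : V} (h : p.getLast? = some a) : a ∈ p := by
  have hne : p ≠ [] := by rintro rfl; simp at h
  rw [List.getLast?_eq_getLast (l := p) hne, Option.some_inj] at h
  exact h ▸ List.getLast_mem hne

lemma mem_of_head?' {p : List V} {a : V} (h : p.head? = some a) : a ∈ p :=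
  List.mem_of_mem_head? (by rw [Option.mem_def]; exact h)

lemma chain'_restrict {D' D : V → V → Prop} {v : V}
    (hDD : ∀ x y, x ≠ v → y ≠ v → D' x y → D x y) {p : List V}
    (hp : p.Chain' D') (hvp : v ∉ p) : p.Chain' D :=
  chain'_mono_mem (fun x hx y hy hr =>
    hDD x y (fun h => hvp (h ▸ hx)) (fun h => hvp (h ▸ hy)) hr) hp

lemma eq_concat_of_getLast? {p : List V} {a : V} (h : p.getLast? = some a) :
    ∃ A, p = A ++ [a] := by
  have hne : p ≠ [] := by rintro rfl; simp at h
  refine ⟨p.dropLast, ?_⟩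
  rw [List.getLast?_eq_getLast (l := p) hne, Option.some_inj] at h
  rw [← h, List.dropLast_append_getLast hne]

lemma split_at_mem {p : List V} (hp : p.Nodup) {v : V} (hm : v ∈ p) :
    ∃ A B, p = A ++ v :: B ∧ v ∉ A ∧ v ∉ B := by
  obtain ⟨A, B, rfl⟩ := List.append_of_mem hm
  rw [List.nodup_append] at hp
  exact ⟨A, B, rfl, fun h => hp.2.2 v h v (by simp) rfl, by
    have := hp.2.1; simp [List.nodup_cons] at this; exact this.1⟩

lemma singlyConnected_flip {D : V → V → Prop} (h : SinglyConnected D) :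
    SinglyConnected (fun a b => D b a) := by
  rintro s t p q ⟨⟨hpn, hpc, hpd⟩, hph, hpl⟩ ⟨⟨hqn, hqc, hqd⟩, hqh, hql⟩
  have key : ∀ r : List V, r.Chain' (fun a b => D b a) → r.reverse.Chain' D := by
    intro r hr
    unfold List.Chain'; rw [List.isChain_reverse]; exact hr
  have := h t s p.reverse q.reverse
    ⟨⟨by simpa using hpn, key p hpc, by simpa using hpd⟩, by simpa using hpl, by simpa using hph⟩
    ⟨⟨by simpa using hqn, key q hqc, by simpa using hqd⟩, by simpa using hql, by simpa using hqh⟩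
  exact List.reverse_injective this

lemma singlyConnected_congr {D E : V → V → Prop} (h : ∀ a b, D a b ↔ E a b)
    (hD : SinglyConnected D) : SinglyConnected E := by
  have : D = E := by funext a b; exact propext (h a b)
  rwa [this] at hD

lemma singlyConnected_bot : SinglyConnected (fun (_ _ : V) => False) := by
  rintro s t p q ⟨⟨hpn, hpc, _⟩, hph, hpl⟩ ⟨⟨hqn, hqc, _⟩, hqh, hql⟩
  have hp1 : p = [s] := by
    cases p with
    | nil => exact absurd rfl hpn
    | cons a l =>
      cases l with
      | nil => simp at hph; simp [hph]
      | cons b l' => exact absurd (List.isChain_cons_cons.1 hpc).1 id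
  have hq1 : q = [s] := by
    cases q with
    | nil => exact absurd rfl hqn
    | cons a l =>
      cases l with
      | nil => simp at hqh; simp [hqh]
      | cons b l' => exact absurd (List.isChain_cons_cons.1 hqc).1 id
  rw [hp1, hq1]


lemma sc_pendant {D : V → V → Prop} (hsc : SinglyConnected D) {u v : V} (huv : u ≠ v)
    (hf1 : ∀ x, ¬ D v x) (hf2 : ∀ x, ¬ D x v) :
    SinglyConnected (fun x y => D x y ∨ (x = u ∧ y = v)) := by
  set D' : V → V → Prop := fun x y => D x y ∨ (x = u ∧ y = v) with hD'
  have hres : ∀ x y, x ≠ v → y ≠ v → D' x y → D x y := by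
    rintro x y hx hy (h | ⟨rfl, rfl⟩)
    · exact h
    · exact absurd rfl hy
  have hnoout : ∀ x, ¬ D' v x := by
    rintro x (h | ⟨rfl, rfl⟩)
    · exact hf1 x h
    · exact huv rfl
  have shape : ∀ s t (p : List V), IsDipathFromTo D' s t p → v ∈ p →
      t = v ∧ (p = [v] ∧ s = v ∨ ∃ A, p = A ++ [v] ∧ IsDipathFromTo D s u A ∧ v ∉ A) := by
    rintro s t p ⟨⟨hpn, hpc, hpd⟩, hph, hpl⟩ hvp
    have hlast : p.getLast? = some v := last_of_no_out (fun x _ => hnoout x) hpc hvp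
    have ht : t = v := Option.some_inj.1 (hpl.symm.trans hlast)
    refine ⟨ht, ?_⟩
    obtain ⟨A, rfl⟩ := eq_concat_of_getLast? hlast
    have hvA : v ∉ A := by
      rw [List.nodup_append] at hpd
      exact fun h => hpd.2.2 v h v (by simp) rfl
    rcases eq_or_ne A [] with rfl | hAne
    · left
      simp at hph
      exact ⟨rfl, hph.symm⟩
    · right
      unfold List.Chain' at hpc; rw [List.isChain_append] at hpc
      obtain ⟨x, hx⟩ : ∃ x, A.getLast? = some x := by
        have := List.getLast?_isSome (l := A)
        rcases h : A.getLast? with _ | x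
        · rw [h] at this; simp [hAne] at this
        · exact ⟨x, rfl⟩
      have hxv : D' x v := hpc.2.2 x hx v (by simp)
      have hxu : x = u := by
        rcases hxv with h | ⟨rfl, _⟩
        · exact absurd h (hf2 x)
        · rfl
      refine ⟨A, rfl, ⟨⟨hAne, chain'_restrict hres hpc.1 hvA, hpd.of_append_left⟩, ?_, ?_⟩, hvA⟩
      · rw [List.head?_append] at hph
        rcases hA : A.head? with _ | a
        · exact absurd (List.head?_eq_none_iff.1 hA) hAne
        · rw [hA] at hph; simpa using hph
      · rw [hx, hxu]
  rintro s t p q hp hq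
  by_cases hvp : v ∈ p
  · have hvq : v ∈ q := by
      have := (shape s t p hp hvp).1
      subst this
      exact mem_of_getLast?' hq.2.2
    rcases (shape s t p hp hvp).2 with ⟨rfl, rfl⟩ | ⟨A, rfl, hA, hvA⟩ <;>
      rcases (shape s t q hq hvq).2 with ⟨rfl, hs⟩ | ⟨A', rfl, hA', hvA'⟩
    · rfl
    · exact absurd (List.mem_of_mem_head? (hA'.2.1 ▸ rfl)) hvA'
    · exact absurd (List.mem_of_mem_head? (hA.2.1 ▸ (hs ▸ rfl : (some s : Option V) = some v) ▸ rfl)) hvA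
    · rw [hsc s u A A' hA hA']
  · have hvq : v ∉ q := by
      intro hvq
      have := (shape s t q hq hvq).1
      subst this
      exact hvp (mem_of_getLast?' hp.2.2)
    have hp' : IsDipathFromTo D s t p :=
      ⟨⟨hp.1.1, chain'_restrict hres hp.1.2.1 hvp, hp.1.2.2⟩, hp.2.1, hp.2.2⟩
    have hq' : IsDipathFromTo D s t q :=
      ⟨⟨hq.1.1, chain'_restrict hres hq.1.2.1 hvq, hq.1.2.2⟩, hq.2.1, hq.2.2⟩
    exact hsc s t p q hp' hq'

lemma sc_falseTwin_source {D : V → V → Prop} (hsc : SinglyConnected D) {u v : V}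
    (huv : u ≠ v) (hf1 : ∀ x, ¬ D v x) (hf2 : ∀ x, ¬ D x v) (hsrc : ∀ x, ¬ D x u) :
    SinglyConnected (fun x y => D x y ∨ (x = v ∧ D u y)) := by
  set D' : V → V → Prop := fun x y => D x y ∨ (x = v ∧ D u y) with hD'
  have hres : ∀ x y, x ≠ v → y ≠ v → D' x y → D x y := by
    rintro x y hx hy (h | ⟨rfl, h⟩)
    · exact h
    · exact absurd rfl hx
  have hvin : ∀ x, ¬ D' x v := by
    rintro x (h | ⟨rfl, h⟩)
    · exact hf2 x h
    · exact hf2 u h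
  have huin : ∀ x, ¬ D' x u := by
    rintro x (h | ⟨rfl, h⟩)
    · exact hsrc x h
    · exact hsrc u h
  -- a dipath containing v starts with v, and replacing v by u gives a D-dipath
  have shape : ∀ s t (p : List V), IsDipathFromTo D' s t p → v ∈ p →
      s = v ∧ (p = [v] ∧ t = v ∨
        ∃ P, p = v :: P ∧ IsDipathFromTo D u t (u :: P) ∧ v ∉ P ∧ u ∉ P) := by
    rintro s t p ⟨⟨hpn, hpc, hpd⟩, hph, hpl⟩ hvp
    have hhead : p.head? = some v := head_of_no_in (fun x _ => hvin x) hpc hvp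
    have hs : s = v := Option.some_inj.1 (hph.symm.trans hhead)
    refine ⟨hs, ?_⟩
    obtain ⟨P, rfl⟩ : ∃ P, p = v :: P := by
      cases p with
      | nil => exact absurd rfl hpn
      | cons a P => 
        simp only [List.head?_cons, Option.some_inj] at hhead
        exact ⟨P, by rw [hhead]⟩
    have hvP : v ∉ P := (List.nodup_cons.1 hpd).1
    rcases eq_or_ne P [] with rfl | hPne
    · left
      simp at hpl
      exact ⟨rfl, hpl.symm⟩
    · right
      obtain ⟨b, P₂, rfl⟩ : ∃ b P₂, P = b :: P₂ := by
        cases P with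
        | nil => exact absurd rfl hPne
        | cons b P₂ => exact ⟨b, P₂, rfl⟩
      have hvb : D' v b := (List.isChain_cons_cons.1 hpc).1
      have hub : D u b := by
        rcases hvb with h | ⟨_, h⟩
        · exact absurd h (hf1 b)
        · exact h
      have hPc : (b :: P₂).Chain' D' := (List.isChain_cons_cons.1 hpc).2
      have huP : u ∉ (b :: P₂) := by
        intro huP
        have := head_of_no_in (fun x _ => huin x) hPc huP
        simp at this
        exact hsrc u (this ▸ hub)
      have hPcD : (b :: P₂).Chain' D := chain'_restrict hres hPc hvP
      refine ⟨b :: P₂, rfl, ⟨⟨by simp, ?_, ?_⟩, by simp, ?_⟩, hvP, huP⟩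
      · unfold List.Chain'; rw [List.isChain_cons_cons]
        exact ⟨hub, hPcD⟩
      · rw [List.nodup_cons]
        exact ⟨huP, List.nodup_cons.1 hpd |>.2⟩
      · rw [List.getLast?_cons_cons] at hpl ⊢
        exact hpl
  rintro s t p q hp hq
  by_cases hvp : v ∈ p
  · have hvq : v ∈ q := by
      have := (shape s t p hp hvp).1
      subst this
      exact List.mem_of_mem_head? (hq.2.1 ▸ rfl)
    rcases (shape s t p hp hvp).2 with ⟨rfl, rfl⟩ | ⟨P, rfl, hP, hvP, huP⟩ <;>
      rcases (shape s t q hq hvq).2 with ⟨rfl, ht⟩ | ⟨Q, rfl, hQ, hvQ, huQ⟩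
    · rfl
    · exact absurd (mem_of_getLast?' hQ.2.2) (by simp [huQ, Ne.symm huv, hvQ])
    · exact absurd (mem_of_getLast?' hP.2.2) (by
        subst ht
        rw [List.mem_cons]
        exact not_or.2 ⟨Ne.symm huv, hvP⟩)
    · have := hsc u t (u :: P) (u :: Q) hP hQ
      rw [List.cons.injEq] at this
      rw [this.2]
  · have hvq : v ∉ q := by
      intro hvq
      have := (shape s t q hq hvq).1
      subst this
      exact hvp (List.mem_of_mem_head? (hp.2.1 ▸ rfl))
    have hp' : IsDipathFromTo D s t p :=
      ⟨⟨hp.1.1, chain'_restrict hres hp.1.2.1 hvp, hp.1.2.2⟩, hp.2.1, hp.2.2⟩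
    have hq' : IsDipathFromTo D s t q :=
      ⟨⟨hq.1.1, chain'_restrict hres hq.1.2.1 hvq, hq.1.2.2⟩, hq.2.1, hq.2.2⟩
    exact hsc s t p q hp' hq'

lemma sc_triangle {D : V → V → Prop} (hsc : SinglyConnected D) {u v w : V}
    (huv : u ≠ v) (huw : u ≠ w) (hvw : v ≠ w)
    (hf1 : ∀ x, ¬ D v x) (hf2 : ∀ x, ¬ D x v)
    (harc : D u w) (hin : ∀ x, ¬ D x u) (hout : ∀ x, D u x → x = w) :
    SinglyConnected (fun x y => D x y ∨ (x = w ∧ y = v) ∨ (x = v ∧ y = u)) := by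
  set D' : V → V → Prop := fun x y => D x y ∨ (x = w ∧ y = v) ∨ (x = v ∧ y = u) with hD'
  have hres : ∀ x y, x ≠ v → y ≠ v → D' x y → D x y := by
    rintro x y hx hy (h | ⟨h1, h2⟩ | ⟨h1, h2⟩)
    · exact h
    · exact absurd h2 hy
    · exact absurd h1 hx
  have hvin : ∀ x, D' x v → x = w := by
    rintro x (h | ⟨h1, h2⟩ | ⟨h1, h2⟩)
    · exact absurd h (hf2 x)
    · exact h1
    · exact absurd h2.symm huv
  have hvout : ∀ x, D' v x → x = u := by
    rintro x (h | ⟨h1, h2⟩ | ⟨h1, h2⟩)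
    · exact absurd h (hf1 x)
    · exact absurd h1 hvw
    · exact h2
  have huin : ∀ x, D' x u → x = v := by
    rintro x (h | ⟨h1, h2⟩ | ⟨h1, h2⟩)
    · exact absurd h (hin x)
    · exact absurd h2 huv
    · exact h1
  have huout : ∀ x, D' u x → x = w := by
    rintro x (h | ⟨h1, h2⟩ | ⟨h1, h2⟩)
    · exact hout x h
    · exact absurd h1 huw
    · exact absurd h1 huv
  have shape : ∀ s t (p : List V), IsDipathFromTo D' s t p → v ∈ p →
      (p = [v] ∧ s = v ∧ t = v) ∨
      (p = [v, u] ∧ s = v ∧ t = u) ∨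
      (∃ P, p = v :: u :: P ∧ s = v ∧ IsDipathFromTo D w t P ∧ u ∉ P ∧ v ∉ P) ∨
      (∃ A, p = A ++ [v] ∧ t = v ∧ IsDipathFromTo D s w A ∧ v ∉ A) ∨
      (∃ A, p = A ++ [v, u] ∧ t = u ∧ IsDipathFromTo D s w A ∧ v ∉ A ∧ u ∉ A) := by
    rintro s t p ⟨⟨hpn, hpc, hpd⟩, hph, hpl⟩ hvp
    obtain ⟨A, B, rfl, hvA, hvB⟩ := split_at_mem hpd hvp
    have hdisj : A.Disjoint (v :: B) := by
      intro a ha hb; exact (List.nodup_append.1 hpd).2.2 a ha a hb rfl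
    unfold List.Chain' at hpc; rw [List.isChain_append] at hpc
    obtain ⟨hcA, hcB, hlink⟩ := hpc
    rcases eq_or_ne A [] with rfl | hAne
    · -- p = v :: B
      simp only [List.nil_append] at hph hpl hpd ⊢
      have hs : s = v := by
        simp only [List.head?_cons, Option.some_inj] at hph
        exact hph.symm
      rcases eq_or_ne B [] with rfl | hBne
      · left
        simp only [List.getLast?_singleton, Option.some_inj] at hpl
        exact ⟨rfl, hs, hpl.symm⟩
      obtain ⟨B₂, rfl⟩ : ∃ B₂, B = u :: B₂ := by
        cases B with
        | nil => exact absurd rfl hBne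
        | cons b B₂ => exact ⟨B₂, by rw [hvout b (List.isChain_cons_cons.1 hcB).1]⟩
      rcases eq_or_ne B₂ [] with rfl | hB₂ne
      · right; left
        simp only [List.getLast?_cons_cons, List.getLast?_singleton, Option.some_inj] at hpl
        exact ⟨rfl, hs, hpl.symm⟩
      obtain ⟨B₃, rfl⟩ : ∃ B₃, B₂ = w :: B₃ := by
        cases B₂ with
        | nil => exact absurd rfl hB₂ne
        | cons c B₃ =>
          exact ⟨B₃, by rw [huout c (List.isChain_cons_cons.1 (List.isChain_cons_cons.1 hcB).2).1]⟩
      right; right; left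
      have hcB₂ : (w :: B₃).Chain' D' := (List.isChain_cons_cons.1 (List.isChain_cons_cons.1 hcB).2).2
      have hvB₂ : v ∉ (w :: B₃) := fun h => hvB (List.mem_cons_of_mem _ h)
      have huB₂ : u ∉ (w :: B₃) := (List.nodup_cons.1 (List.nodup_cons.1 hpd).2).1
      refine ⟨w :: B₃, rfl, hs, ⟨⟨by simp, chain'_restrict hres hcB₂ hvB₂, ?_⟩, by simp, ?_⟩,
        huB₂, hvB₂⟩
      · exact (List.nodup_cons.1 (List.nodup_cons.1 hpd).2).2
      · rw [List.getLast?_cons_cons, List.getLast?_cons_cons] at hpl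
        exact hpl
    · -- A nonempty
      obtain ⟨x, hx⟩ : ∃ x, A.getLast? = some x := by
        rcases h : A.getLast? with _ | x
        · have := List.getLast?_isSome (l := A)
          rw [h] at this; simp [hAne] at this
        · exact ⟨x, rfl⟩
      have hxw : x = w := hvin x (hlink x hx v (by simp))
      rw [hxw] at hx
      have hhA : A.head? = some s := by
        rw [List.head?_append] at hph
        rcases hA : A.head? with _ | a
        · exact absurd (List.head?_eq_none_iff.1 hA) hAne
        · rw [hA] at hph; simpa using hph
      have hAD : IsDipathFromTo D s w A :=
        ⟨⟨hAne, chain'_restrict hres hcA hvA, (List.nodup_append.1 hpd).1⟩, hhA, hx⟩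
      rcases eq_or_ne B [] with rfl | hBne
      · right; right; right; left
        rw [List.getLast?_append (l := A) (l' := [v])] at hpl
        simp only [List.getLast?_singleton, Option.or_some, Option.some_or, Option.some_inj] at hpl
        exact ⟨A, rfl, hpl.symm, hAD, hvA⟩
      obtain ⟨B₂, rfl⟩ : ∃ B₂, B = u :: B₂ := by
        cases B with
        | nil => exact absurd rfl hBne
        | cons b B₂ => exact ⟨B₂, by rw [hvout b (List.isChain_cons_cons.1 hcB).1]⟩
      rcases eq_or_ne B₂ [] with rfl | hB₂ne
      · right; right; right; right
        rw [List.getLast?_append (l := A) (l' := [v, u])] at hpl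
        simp only [List.getLast?_cons_cons, List.getLast?_singleton, Option.or_some,
          Option.some_or, Option.some_inj] at hpl
        exact ⟨A, rfl, hpl.symm, hAD, hvA, fun h => hdisj h (by simp)⟩
      obtain ⟨B₃, rfl⟩ : ∃ B₃, B₂ = w :: B₃ := by
        cases B₂ with
        | nil => exact absurd rfl hB₂ne
        | cons c B₃ =>
          exact ⟨B₃, by rw [huout c (List.isChain_cons_cons.1 (List.isChain_cons_cons.1 hcB).2).1]⟩
      exact absurd (mem_of_getLast?' hx) (fun h => hdisj h (by simp))
  -- v cannot lie in exactly one of two parallel dipaths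
  have aux : ∀ s t (p q : List V), IsDipathFromTo D' s t p → IsDipathFromTo D' s t q →
      v ∈ p → v ∉ q → False := by
    intro s t p q hp hq hvp hvq
    rcases shape s t p hp hvp with ⟨_, h1s, _⟩ | ⟨_, h1s, _⟩ | ⟨P, _, h1s, _⟩ |
        ⟨A, _, h4t, _⟩ | ⟨A, _, h5t, hA, hvA, huA⟩
    · exact hvq (mem_of_head?' (h1s ▸ hq.2.1))
    · exact hvq (mem_of_head?' (h1s ▸ hq.2.1))
    · exact hvq (mem_of_head?' (h1s ▸ hq.2.1))
    · exact hvq (mem_of_getLast?' (h4t ▸ hq.2.2))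
    · have huq : u ∈ q := mem_of_getLast?' (h5t ▸ hq.2.2)
      have hqh : q.head? = some u :=
        head_of_no_in (fun x hx hxu => hvq ((huin x hxu) ▸ hx)) hq.1.2.1 huq
      have hsu : s = u := Option.some_inj.1 (hq.2.1.symm.trans hqh)
      exact huA (mem_of_head?' (hsu ▸ hA.2.1))
  rintro s t p q hp hq
  by_cases hvp : v ∈ p
  · by_cases hvq : v ∈ q
    · rcases shape s t p hp hvp with ⟨rfl, h1s, h1t⟩ | ⟨rfl, h1s, h1t⟩ |
          ⟨P, rfl, h1s, hP, huP, hvP⟩ | ⟨A, rfl, h1t, hA, hvA⟩ | ⟨A, rfl, h1t, hA, hvA, huA⟩ <;>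
        rcases shape s t q hq hvq with ⟨rfl, h2s, h2t⟩ | ⟨rfl, h2s, h2t⟩ |
          ⟨Q, rfl, h2s, hQ, huQ, hvQ⟩ | ⟨A', rfl, h2t, hA', hvA'⟩ |
          ⟨A', rfl, h2t, hA', hvA', huA'⟩
      · rfl
      · exact absurd (h1t.symm.trans h2t) (Ne.symm huv)
      · exact absurd (h1t ▸ mem_of_getLast?' hQ.2.2) hvQ
      · exact absurd (mem_of_head?' (h1s ▸ hA'.2.1)) hvA'
      · exact absurd (h1t.symm.trans h2t) (Ne.symm huv)
      · exact absurd (h1t.symm.trans h2t) huv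
      · rfl
      · exact absurd (h1t ▸ mem_of_getLast?' hQ.2.2) huQ
      · exact absurd (h1t.symm.trans h2t) huv
      · exact absurd (mem_of_head?' (h1s ▸ hA'.2.1)) hvA'
      · exact absurd (h2t ▸ mem_of_getLast?' hP.2.2) hvP
      · exact absurd (h2t ▸ mem_of_getLast?' hP.2.2) huP
      · rw [hsc w t P Q hP hQ]
      · exact absurd (h2t ▸ mem_of_getLast?' hP.2.2) hvP
      · exact absurd (h2t ▸ mem_of_getLast?' hP.2.2) huP
      · exact absurd (mem_of_head?' (h2s ▸ hA.2.1)) hvA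
      · exact absurd (mem_of_head?' (h2s ▸ hA.2.1)) hvA
      · exact absurd (mem_of_head?' (h2s ▸ hA.2.1)) hvA
      · rw [hsc s w A A' hA hA']
      · exact absurd (h1t.symm.trans h2t) (Ne.symm huv)
      · exact absurd (mem_of_head?' (h2s ▸ hA.2.1)) hvA
      · exact absurd (mem_of_head?' (h2s ▸ hA.2.1)) hvA
      · exact absurd (mem_of_head?' (h2s ▸ hA.2.1)) hvA
      · exact absurd (h1t.symm.trans h2t) huv
      · rw [hsc s w A A' hA hA']
    · exact absurd (aux s t p q hp hq hvp hvq) not_false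
  · by_cases hvq : v ∈ q
    · exact absurd (aux s t q p hq hp hvq hvp) not_false
    · have hp' : IsDipathFromTo D s t p :=
        ⟨⟨hp.1.1, chain'_restrict hres hp.1.2.1 hvp, hp.1.2.2⟩, hp.2.1, hp.2.2⟩
      have hq' : IsDipathFromTo D s t q :=
        ⟨⟨hq.1.1, chain'_restrict hres hq.1.2.1 hvq, hq.1.2.2⟩, hq.2.1, hq.2.2⟩
      exact hsc s t p q hp' hq'

/-- The invariant carried through the strong construction: `D` is an
sc-orientation of the induced subgraph on `s` in which every vertex whose
neighborhood (within `s`) is independent is a source or a sink. -/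
structure Good {V : Type*} [DecidableEq V] (G : SimpleGraph V) (s : Finset V)
    (D : V → V → Prop) : Prop where
  memL : ∀ ⦃x y⦄, D x y → x ∈ s
  memR : ∀ ⦃x y⦄, D x y → y ∈ s
  adj : ∀ ⦃x y⦄, D x y → G.Adj x y
  total : ∀ ⦃x y⦄, x ∈ s → y ∈ s → G.Adj x y → D x y ∨ D y x
  asymm : ∀ ⦃x y⦄, D x y → ¬ D y x
  sc : SinglyConnected D
  srcsnk : ∀ u ∈ s, (∀ x ∈ s, ∀ y ∈ s, G.Adj u x → G.Adj u y → ¬ G.Adj x y) →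
    (∀ x, ¬ D x u) ∨ (∀ x, ¬ D u x)

variable {G : SimpleGraph V} [DecidableEq V] {s : Finset V} {D : V → V → Prop}

lemma Good.flip (h : Good G s D) : Good G s (fun a b => D b a) where
  memL := fun x y hd => h.memR hd
  memR := fun x y hd => h.memL hd
  adj := fun x y hd => (h.adj hd).symm
  total := fun x y hx hy ha => (h.total hy hx ha.symm)
  asymm := fun x y hd hd' => h.asymm hd' hd
  sc := singlyConnected_flip h.sc
  srcsnk := fun u hu hind => (h.srcsnk u hu hind).symm

lemma good_congr {E : V → V → Prop} (hDE : ∀ a b, D a b ↔ E a b) (h : Good G s D) :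
    Good G s E := by
  have : D = E := by funext a b; exact propext (hDE a b)
  rwa [this] at h

lemma good_pendant (h : Good G s D) {u v : V} (hu : u ∈ s) (hv : v ∉ s)
    (hN : ∀ x ∈ s, (G.Adj v x ↔ x = u))
    (hcase : (∀ x, ¬ D x u) ∨ ∃ x ∈ s, ∃ y ∈ s, G.Adj u x ∧ G.Adj u y ∧ G.Adj x y) :
    Good G (insert v s) (fun x y => D x y ∨ (x = u ∧ y = v)) := by
  have huv : u ≠ v := fun hh => hv (hh ▸ hu)
  have hf1 : ∀ x, ¬ D v x := fun x hd => hv (h.memL hd)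
  have hf2 : ∀ x, ¬ D x v := fun x hd => hv (h.memR hd)
  have hadjuv : G.Adj u v := ((hN u hu).2 rfl).symm
  refine ⟨?_, ?_, ?_, ?_, ?_, ?_, ?_⟩
  · rintro x y (hd | ⟨h1, _⟩)
    · exact Finset.mem_insert_of_mem (h.memL hd)
    · exact h1.symm ▸ Finset.mem_insert_of_mem hu
  · rintro x y (hd | ⟨_, h2⟩)
    · exact Finset.mem_insert_of_mem (h.memR hd)
    · exact h2.symm ▸ Finset.mem_insert_self v s
  · rintro x y (hd | ⟨h1, h2⟩)
    · exact h.adj hd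
    · exact h1.symm ▸ h2.symm ▸ hadjuv
  · intro x y hx hy ha
    rcases Finset.mem_insert.1 hx with hxv | hx <;> rcases Finset.mem_insert.1 hy with hyv | hy
    · exact absurd (hxv ▸ hyv ▸ ha) (G.irrefl)
    · exact Or.inr (Or.inr ⟨(hN y hy).1 (hxv ▸ ha), hxv⟩)
    · exact Or.inl (Or.inr ⟨(hN x hx).1 (hyv ▸ ha.symm), hyv⟩)
    · rcases h.total hx hy ha with hd | hd
      · exact Or.inl (Or.inl hd)
      · exact Or.inr (Or.inl hd)
  · rintro x y (hd | ⟨h1, h2⟩) (hd' | ⟨h3, h4⟩)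
    · exact h.asymm hd hd'
    · exact hf1 y (h4 ▸ hd)
    · exact hf1 x (h2 ▸ hd')
    · exact huv (h1.symm.trans h4)
  · exact sc_pendant h.sc huv hf1 hf2
  · intro z hz hind
    rcases Finset.mem_insert.1 hz with hzv | hz
    · refine Or.inr ?_
      rintro x (hd | ⟨h1, _⟩)
      · exact hf1 x (hzv ▸ hd)
      · exact huv (h1.symm.trans hzv)
    by_cases hzu : z = u
    · rcases hcase with hsrc | ⟨x, hx, y, hy, hax, hay, haxy⟩
      · refine Or.inl ?_
        rintro x (hd | ⟨_, h2⟩)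
        · exact hsrc x (hzu ▸ hd)
        · exact hv (h2 ▸ hz)
      · exact absurd haxy (hind x (Finset.mem_insert_of_mem hx) y
          (Finset.mem_insert_of_mem hy) (hzu.symm ▸ hax) (hzu.symm ▸ hay))
    · have hold := h.srcsnk z hz (fun x hx y hy hax hay =>
        hind x (Finset.mem_insert_of_mem hx) y (Finset.mem_insert_of_mem hy) hax hay)
      rcases hold with hl | hr
      · refine Or.inl ?_
        rintro x (hd | ⟨_, h2⟩)
        · exact hl x hd
        · exact hv (h2 ▸ hz)
      · refine Or.inr ?_
        rintro x (hd | ⟨h1, _⟩)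
        · exact hr x hd
        · exact hzu h1

lemma good_falseTwin (h : Good G s D) {u v : V} (hu : u ∈ s) (hv : v ∉ s)
    (hN : ∀ x ∈ s, (G.Adj v x ↔ G.Adj u x)) (hsrc : ∀ x, ¬ D x u) :
    Good G (insert v s) (fun x y => D x y ∨ (x = v ∧ D u y)) := by
  have huv : u ≠ v := fun hh => hv (hh ▸ hu)
  have hf1 : ∀ x, ¬ D v x := fun x hd => hv (h.memL hd)
  have hf2 : ∀ x, ¬ D x v := fun x hd => hv (h.memR hd)
  refine ⟨?_, ?_, ?_, ?_, ?_, ?_, ?_⟩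
  · rintro x y (hd | ⟨h1, _⟩)
    · exact Finset.mem_insert_of_mem (h.memL hd)
    · exact h1.symm ▸ Finset.mem_insert_self v s
  · rintro x y (hd | ⟨_, hd⟩)
    · exact Finset.mem_insert_of_mem (h.memR hd)
    · exact Finset.mem_insert_of_mem (h.memR hd)
  · rintro x y (hd | ⟨h1, hd⟩)
    · exact h.adj hd
    · exact h1.symm ▸ (hN y (h.memR hd)).2 (h.adj hd)
  · intro x y hx hy ha
    rcases Finset.mem_insert.1 hx with hxv | hx <;> rcases Finset.mem_insert.1 hy with hyv | hy
    · exact absurd (hxv ▸ hyv ▸ ha) (G.irrefl)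
    · have hay : G.Adj u y := (hN y hy).1 (hxv ▸ ha)
      rcases h.total hu hy hay with hd | hd
      · exact Or.inl (Or.inr ⟨hxv, hd⟩)
      · exact absurd hd (hsrc y)
    · have hax : G.Adj u x := (hN x hx).1 (hyv ▸ ha.symm)
      rcases h.total hu hx hax with hd | hd
      · exact Or.inr (Or.inr ⟨hyv, hd⟩)
      · exact absurd hd (hsrc x)
    · rcases h.total hx hy ha with hd | hd
      · exact Or.inl (Or.inl hd)
      · exact Or.inr (Or.inl hd)
  · rintro x y (hd | ⟨h1, hd⟩) (hd' | ⟨h3, hd'⟩)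
    · exact h.asymm hd hd'
    · exact hf2 x (h3 ▸ hd)
    · exact hf2 y (h1 ▸ hd')
    · exact hf2 u (h3 ▸ hd)
  · exact sc_falseTwin_source h.sc huv hf1 hf2 hsrc
  · intro z hz hind
    rcases Finset.mem_insert.1 hz with hzv | hz
    · refine Or.inl ?_
      rintro x (hd | ⟨_, hd⟩)
      · exact hf2 x (hzv ▸ hd)
      · exact hf2 u (hzv ▸ hd)
    by_cases hzu : z = u
    · refine Or.inl ?_
      rintro x (hd | ⟨_, hd⟩)
      · exact hsrc x (hzu ▸ hd)
      · exact hsrc u (hzu ▸ hd)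
    · have hold := h.srcsnk z hz (fun x hx y hy hax hay =>
        hind x (Finset.mem_insert_of_mem hx) y (Finset.mem_insert_of_mem hy) hax hay)
      rcases hold with hl | hr
      · refine Or.inl ?_
        rintro x (hd | ⟨_, hd⟩)
        · exact hl x hd
        · exact hl u hd
      · refine Or.inr ?_
        rintro x (hd | ⟨h1, _⟩)
        · exact hr x hd
        · exact hv (h1 ▸ hz)

lemma good_trueTwin (h : Good G s D) {u v w : V} (hu : u ∈ s) (hv : v ∉ s)
    (hN : ∀ x ∈ s, (G.Adj v x ↔ (G.Adj u x ∨ x = u)))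
    (hw : w ∈ s) (huw : G.Adj u w) (huniq : ∀ x ∈ s, G.Adj u x → x = w)
    (harc : D u w) :
    Good G (insert v s) (fun x y => D x y ∨ (x = w ∧ y = v) ∨ (x = v ∧ y = u)) := by
  have huv : u ≠ v := fun hh => hv (hh ▸ hu)
  have hwv : w ≠ v := fun hh => hv (hh ▸ hw)
  have huw' : u ≠ w := G.ne_of_adj huw
  have hf1 : ∀ x, ¬ D v x := fun x hd => hv (h.memL hd)
  have hf2 : ∀ x, ¬ D x v := fun x hd => hv (h.memR hd)
  have hin : ∀ x, ¬ D x u := by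
    intro x hd
    have hxw : x = w := huniq x (h.memL hd) (h.adj hd).symm
    exact h.asymm harc (hxw ▸ hd)
  have hout : ∀ x, D u x → x = w := fun x hd => huniq x (h.memR hd) (h.adj hd)
  have hadjvw : G.Adj v w := (hN w hw).2 (Or.inl huw)
  have hadjvu : G.Adj v u := (hN u hu).2 (Or.inr rfl)
  refine ⟨?_, ?_, ?_, ?_, ?_, ?_, ?_⟩
  · rintro x y (hd | ⟨h1, _⟩ | ⟨h1, _⟩)
    · exact Finset.mem_insert_of_mem (h.memL hd)
    · exact h1.symm ▸ Finset.mem_insert_of_mem hw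
    · exact h1.symm ▸ Finset.mem_insert_self v s
  · rintro x y (hd | ⟨_, h2⟩ | ⟨_, h2⟩)
    · exact Finset.mem_insert_of_mem (h.memR hd)
    · exact h2.symm ▸ Finset.mem_insert_self v s
    · exact h2.symm ▸ Finset.mem_insert_of_mem hu
  · rintro x y (hd | ⟨h1, h2⟩ | ⟨h1, h2⟩)
    · exact h.adj hd
    · exact h1.symm ▸ h2.symm ▸ hadjvw.symm
    · exact h1.symm ▸ h2.symm ▸ hadjvu
  · intro x y hx hy ha
    rcases Finset.mem_insert.1 hx with hxv | hx <;> rcases Finset.mem_insert.1 hy with hyv | hy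
    · exact absurd (hxv ▸ hyv ▸ ha) (G.irrefl)
    · rcases (hN y hy).1 (hxv ▸ ha) with hay | hyu
      · exact Or.inr (Or.inr (Or.inl ⟨huniq y hy hay, hxv⟩))
      · exact Or.inl (Or.inr (Or.inr ⟨hxv, hyu⟩))
    · rcases (hN x hx).1 (hyv ▸ ha.symm) with hax | hxu
      · exact Or.inl (Or.inr (Or.inl ⟨huniq x hx hax, hyv⟩))
      · exact Or.inr (Or.inr (Or.inr ⟨hyv, hxu⟩))
    · rcases h.total hx hy ha with hd | hd
      · exact Or.inl (Or.inl hd)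
      · exact Or.inr (Or.inl hd)
  · rintro x y (hd | ⟨h1, h2⟩ | ⟨h1, h2⟩) (hd' | ⟨h3, h4⟩ | ⟨h3, h4⟩)
    · exact h.asymm hd hd'
    · exact hf1 y (h4 ▸ hd)
    · exact hf2 x (h3 ▸ hd)
    · exact hf1 x (h2 ▸ hd')
    · exact hwv (h1.symm.trans h4)
    · exact huw' (h4.symm.trans h1)
    · exact hf2 y (h1 ▸ hd')
    · exact huw' (h2.symm.trans h3)
    · exact huv (h2.symm.trans h3)
  · exact sc_triangle h.sc huv huw' (Ne.symm hwv) hf1 hf2 harc hin hout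
  · intro z hz hind
    rcases Finset.mem_insert.1 hz with hzv | hz
    · exact absurd huw (hind u (Finset.mem_insert_of_mem hu) w
        (Finset.mem_insert_of_mem hw) (hzv ▸ hadjvu) (hzv ▸ hadjvw)).elim
    by_cases hzu : z = u
    · exact absurd hadjvw.symm (hind w (Finset.mem_insert_of_mem hw) v
        (Finset.mem_insert_self v s) (hzu.symm ▸ huw) (hzu.symm ▸ hadjvu.symm)).elim
    by_cases hzw : z = w
    · exact absurd hadjvu.symm (hind u (Finset.mem_insert_of_mem hu) v
        (Finset.mem_insert_self v s) (hzw.symm ▸ huw.symm) (hzw.symm ▸ hadjvw.symm)).elim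
    · have hold := h.srcsnk z hz (fun x hx y hy hax hay =>
        hind x (Finset.mem_insert_of_mem hx) y (Finset.mem_insert_of_mem hy) hax hay)
      rcases hold with hl | hr
      · refine Or.inl ?_
        rintro x (hd | ⟨_, h2⟩ | ⟨_, h2⟩)
        · exact hl x hd
        · exact hv (h2 ▸ hz)
        · exact hzu h2
      · refine Or.inr ?_
        rintro x (hd | ⟨h1, _⟩ | ⟨h1, _⟩)
        · exact hr x hd
        · exact hzw h1
        · exact hv (h1 ▸ hz)

lemma good_single (v : V) : Good G {v} (fun _ _ => False) where
  memL := fun _ _ hd => hd.elim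
  memR := fun _ _ hd => hd.elim
  adj := fun _ _ hd => hd.elim
  total := fun x y hx hy ha =>
    absurd ((Finset.mem_singleton.1 hx).trans (Finset.mem_singleton.1 hy).symm)
      (G.ne_of_adj ha)
  asymm := fun _ _ hd => hd.elim
  sc := singlyConnected_bot
  srcsnk := fun _ _ _ => Or.inl (fun _ hd => hd)

lemma sdh_good {s : Finset V} (h : SDHOn G s) : ∃ D, Good G s D := by
  induction h with
  | single v => exact ⟨_, good_single v⟩
  | @pendant s' u v hu hv hs hN ih =>
    obtain ⟨D, hD⟩ := ih
    by_cases h1 : ∀ x, ¬ D x u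
    · exact ⟨_, good_pendant hD hu hv hN (Or.inl h1)⟩
    by_cases h2 : ∀ x, ¬ D u x
    · have hG : Good G (insert v s') (fun x y => D y x ∨ (x = u ∧ y = v)) :=
        good_pendant (D := fun a b => D b a) hD.flip hu hv hN (Or.inl h2)
      refine ⟨fun a b => D a b ∨ (a = v ∧ b = u), good_congr ?_ hG.flip⟩
      intro a b
      constructor
      · rintro (hd | ⟨h1', h2'⟩)
        · exact Or.inl hd
        · exact Or.inr ⟨h2', h1'⟩
      · rintro (hd | ⟨h1', h2'⟩)
        · exact Or.inl hd
        · exact Or.inr ⟨h2', h1'⟩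
    · have hmix : ∃ x ∈ s', ∃ y ∈ s', G.Adj u x ∧ G.Adj u y ∧ G.Adj x y := by
        by_contra hcon
        rcases hD.srcsnk u hu (fun x hx y hy hax hay haxy =>
          hcon ⟨x, hx, y, hy, hax, hay, haxy⟩) with hl | hr
        · exact h1 hl
        · exact h2 hr
      exact ⟨_, good_pendant hD hu hv hN (Or.inr hmix)⟩
  | @trueTwin s' u v hu hv hs hN hdeg ih =>
    obtain ⟨D, hD⟩ := ih
    obtain ⟨w, hw1, huniq0⟩ := hdeg
    have hw : w ∈ s' := hw1.1
    have huw : G.Adj u w := hw1.2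
    have huniq : ∀ x ∈ s', G.Adj u x → x = w := fun x hx ha => huniq0 x ⟨hx, ha⟩
    rcases hD.total hu hw huw with harc | harc
    · exact ⟨_, good_trueTwin hD hu hv hN hw huw huniq harc⟩
    · have hG : Good G (insert v s')
          (fun x y => D y x ∨ (x = w ∧ y = v) ∨ (x = v ∧ y = u)) :=
        good_trueTwin (D := fun a b => D b a) hD.flip hu hv hN hw huw huniq harc
      refine ⟨fun a b => D a b ∨ (a = v ∧ b = w) ∨ (a = u ∧ b = v), good_congr ?_ hG.flip⟩
      intro a b
      constructor
      · rintro (hd | ⟨h1', h2'⟩ | ⟨h1', h2'⟩)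
        · exact Or.inl hd
        · exact Or.inr (Or.inl ⟨h2', h1'⟩)
        · exact Or.inr (Or.inr ⟨h2', h1'⟩)
      · rintro (hd | ⟨h1', h2'⟩ | ⟨h1', h2'⟩)
        · exact Or.inl hd
        · exact Or.inr (Or.inl ⟨h2', h1'⟩)
        · exact Or.inr (Or.inr ⟨h2', h1'⟩)
  | @falseTwin s' u v hu hv hs hN hind ih =>
    obtain ⟨D, hD⟩ := ih
    rcases hD.srcsnk u hu hind with hsrc | hsnk
    · exact ⟨_, good_falseTwin hD hu hv hN hsrc⟩
    · have hG : Good G (insert v s') (fun x y => D y x ∨ (x = v ∧ D y u)) :=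
        good_falseTwin (D := fun a b => D b a) hD.flip hu hv hN hsnk
      refine ⟨fun a b => D a b ∨ (b = v ∧ D a u), good_congr ?_ hG.flip⟩
      intro a b
      constructor
      · rintro (hd | ⟨h1', h2'⟩)
        · exact Or.inl hd
        · exact Or.inr ⟨h1', h2'⟩
      · rintro (hd | ⟨h1', h2'⟩)
        · exact Or.inl hd
        · exact Or.inr ⟨h1', h2'⟩

lemma arc_triangle {σ : EdgeOrientation G} (hsc : IsSCOrientation σ) {a b c : V}
    (hab : σ.arc a b) (hbc : G.Adj b c) (hca : G.Adj c a) : σ.arc b c ∧ σ.arc c a := by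
  have hGab : G.Adj a b := (σ.adj_iff a b).2 (Or.inl hab)
  have hab' : a ≠ b := hGab.ne
  have hbc' : b ≠ c := hbc.ne
  have hca' : c ≠ a := hca.ne
  have key : ∀ x y z : V, x ≠ y → y ≠ z → x ≠ z →
      σ.arc x y → σ.arc y z → σ.arc x z → False := by
    intro x y z hxy hyz hxz h1 h2 h3
    have hp : IsDipathFromTo σ.arc x z [x, z] :=
      ⟨⟨by simp, by simp [List.Chain', List.isChain_cons_cons, h3], by simp [hxz]⟩, by simp, by simp⟩
    have hq : IsDipathFromTo σ.arc x z [x, y, z] :=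
      ⟨⟨by simp, by simp [List.Chain', List.isChain_cons_cons, h1, h2], by simp [hxy, hyz, hxz]⟩,
        by simp, by simp⟩
    have := hsc x z _ _ hp hq
    simp at this
  rcases (σ.adj_iff b c).1 hbc with h1 | h1 <;> rcases (σ.adj_iff c a).1 hca with h2 | h2
  · exact ⟨h1, h2⟩
  · exact absurd (key a b c hab' hbc' (Ne.symm hca') hab h1 h2) not_false
  · exact absurd (key c a b hca' hab' (Ne.symm hbc') h2 hab h1) not_false
  · exact absurd (key a c b (Ne.symm hca') (Ne.symm hbc') hab' h2 h1 hab) not_false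

lemma diamond_free_of_sc (hsc : SCOrientable G) :
    ∀ a b c d : V, G.Adj a b → G.Adj a c → G.Adj a d → G.Adj b c → G.Adj b d →
      c ≠ d → False := by
  obtain ⟨σ, hσ⟩ := hsc
  intro a b c d hab hac had hbc hbd hcd
  have main : ∀ a b : V, σ.arc a b → G.Adj a c → G.Adj a d → G.Adj b c → G.Adj b d →
      False := by
    intro a b harc hac had hbc hbd
    have hGab : G.Adj a b := (σ.adj_iff a b).2 (Or.inl harc)
    have h1 := arc_triangle hσ harc hbc hac.symm
    have h2 := arc_triangle hσ harc hbd had.symm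
    have hp : IsDipathFromTo σ.arc b a [b, c, a] :=
      ⟨⟨by simp, by simp [List.Chain', List.isChain_cons_cons, h1.1, h1.2],
        by simp [hbc.ne, hGab.ne', hac.ne']⟩, by simp, by simp⟩
    have hq : IsDipathFromTo σ.arc b a [b, d, a] :=
      ⟨⟨by simp, by simp [List.Chain', List.isChain_cons_cons, h2.1, h2.2],
        by simp [hbd.ne, hGab.ne', had.ne']⟩, by simp, by simp⟩
    have := hσ b a _ _ hp hq
    simp at this
    exact hcd this
  rcases (σ.adj_iff a b).1 hab with h | h
  · exact main a b h hac had hbc hbd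
  · exact main b a h hbc hbd hac had

lemma dh_to_sdh {s : Finset V} (h : DHOn G s)
    (hdf : ∀ a b c d : V, G.Adj a b → G.Adj a c → G.Adj a d → G.Adj b c → G.Adj b d →
      c ≠ d → False) :
    SDHOn G s := by
  induction h with
  | single v => exact SDHOn.single v
  | @pendant s' u v hu hv hs hN ih => exact SDHOn.pendant u v hu hv ih hN
  | @trueTwin s' u v hu hv hs hN ih =>
    by_cases hex : ∃ x ∈ s', G.Adj u x
    · obtain ⟨w, hw, huw⟩ := hex
      refine SDHOn.trueTwin u v hu hv ih hN ⟨w, ⟨hw, huw⟩, ?_⟩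
      rintro x ⟨hx, hax⟩
      by_contra hne
      have hadjuv : G.Adj u v := ((hN u hu).2 (Or.inr rfl)).symm
      have hadjvx : G.Adj v x := (hN x hx).2 (Or.inl hax)
      have hadjvw : G.Adj v w := (hN w hw).2 (Or.inl huw)
      exact hdf u v x w hadjuv hax huw hadjvx hadjvw hne
    · push_neg at hex
      refine SDHOn.pendant u v hu hv ih (fun x hx => ?_)
      constructor
      · intro ha
        rcases (hN x hx).1 ha with h' | h'
        · exact absurd h' (hex x hx)
        · exact h'
      · intro h'
        exact (hN x hx).2 (Or.inr h')
  | @falseTwin s' u v hu hv hs hN ih =>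
    refine SDHOn.falseTwin u v hu hv ih hN (fun x hx y hy hax hay hxy => ?_)
    exact hdf x y u v hxy hax.symm ((hN x hx).2 hax).symm hay.symm ((hN y hy).2 hay).symm
      (fun hh => hv (hh ▸ hu))

end SCAux

/-- A distance hereditary finite graph is sc-orientable iff it is strongly
distance hereditary. -/
theorem distanceHereditary_scOrientable_iff_strongly
    {V : Type*} [Fintype V] [DecidableEq V] (G : SimpleGraph V)
    (hDH : DistanceHereditary G) :
    SCOrientable G ↔ StronglyDistanceHereditary G := by
  constructor
  · intro hSC
    exact SCAux.dh_to_sdh hDH (SCAux.diamond_free_of_sc hSC)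
  · intro hSDH
    obtain ⟨D, hD⟩ := SCAux.sdh_good hSDH
    refine ⟨⟨D, ?_, fun u v h => hD.asymm h⟩, hD.sc⟩
    intro u v
    constructor
    · exact fun ha => hD.total (Finset.mem_univ u) (Finset.mem_univ v) ha
    · rintro (hd | hd)
      · exact hD.adj hd
      · exact (hD.adj hd).symm
end

section
/- Let G be a finite simple undirected graph that contains no house, no hole (cycle of length at least 5), no domino, and no diamond as a subgraph. Then every 2-vertex-connected component (block) of G is bipartite or a triangle. -/
/-- A subgraph `H` of `G` is 2-vertex-connected: it is connected and remains
connected after the deletion of any single vertex. -/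
def TwoVertexConnected {V : Type*} {G : SimpleGraph V} (H : G.Subgraph) : Prop :=
  H.Connected ∧ ∀ v ∈ H.verts, (H.deleteVerts {v}).Connected

/-- A block of `G`: a maximal 2-vertex-connected subgraph of `G`. -/
def IsBlock {V : Type*} {G : SimpleGraph V} (H : G.Subgraph) : Prop :=
  TwoVertexConnected H ∧ ∀ K : G.Subgraph, TwoVertexConnected K → H ≤ K → K = H

/-- The subgraph `H` is a triangle: its vertex set consists of three distinct
mutually adjacent vertices. -/
def IsTriangleSubgraph {V : Type*} {G : SimpleGraph V} (H : G.Subgraph) : Prop :=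
  ∃ a b c : V, a ≠ b ∧ a ≠ c ∧ b ≠ c ∧ H.verts = {a, b, c} ∧
    H.Adj a b ∧ H.Adj b c ∧ H.Adj a c

/-- The diamond graph: `K₄` minus one edge (here the edge `{2,3}` is missing). -/
def diamond : SimpleGraph (Fin 4) :=
  SimpleGraph.fromEdgeSet {s(0,1), s(0,2), s(0,3), s(1,2), s(1,3)}

/-- The house graph: the 4-cycle `0,1,2,3` together with the vertex `4`
adjacent to exactly `0` and `1`. -/
def house : SimpleGraph (Fin 5) :=
  SimpleGraph.fromEdgeSet {s(0,1), s(1,2), s(2,3), s(3,0), s(4,0), s(4,1)}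

/-- The domino: the 2×3 grid graph. -/
def domino : SimpleGraph (Fin 6) :=
  SimpleGraph.fromEdgeSet {s(0,1), s(2,3), s(4,5), s(0,2), s(2,4), s(1,3), s(3,5)}

/-- `X` occurs as a subgraph of `G`: there is an injective graph homomorphism
from `X` to `G`. -/
def HasSubgraphCopy {α β : Type*} (X : SimpleGraph α) (G : SimpleGraph β) : Prop :=
  ∃ f : X →g G, Function.Injective f

section AuxHHDD
open SimpleGraph

lemma aux_sublist_asymm {W : Type*} {l : List W} (hnd : l.Nodup) {a b : W} (hab : a ≠ b)
    (h1 : [a, b].Sublist l) (h2 : [b, a].Sublist l) : False := by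
  induction l with
  | nil => simp at h1
  | cons c t ih =>
    rcases List.sublist_cons_iff.mp h1 with h1' | ⟨r, hr, hrs⟩
    · rcases List.sublist_cons_iff.mp h2 with h2' | ⟨r2, hr2, hrs2⟩
      · exact ih hnd.of_cons h1' h2'
      · obtain ⟨rfl, rfl⟩ : b = c ∧ r2 = [a] :=
          ⟨(List.cons.injEq _ _ _ _ ▸ hr2).1, ((List.cons.injEq _ _ _ _ ▸ hr2).2).symm⟩
        exact (List.nodup_cons.mp hnd).1 (h1'.subset (by simp))
    · obtain ⟨rfl, rfl⟩ : a = c ∧ r = [b] :=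
        ⟨(List.cons.injEq _ _ _ _ ▸ hr).1, ((List.cons.injEq _ _ _ _ ▸ hr).2).symm⟩
      rcases List.sublist_cons_iff.mp h2 with h2' | ⟨r2, hr2, hrs2⟩
      · exact (List.nodup_cons.mp hnd).1 (h2'.subset (by simp))
      · exact hab ((List.cons.injEq _ _ _ _ ▸ hr2).1).symm

lemma aux_isTrail {V : Type*} {G : SimpleGraph V} {v : V} {w : G.Walk v v}
    (h3 : 3 ≤ w.length) (hnd : w.support.tail.Nodup) : w.IsTrail := by
  classical
  rw [Walk.isTrail_def]
  by_contra hdup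
  obtain ⟨e, he⟩ := List.exists_duplicate_iff_not_nodup.mpr hdup
  rw [List.duplicate_iff_sublist] at he
  have he' : [e, e].Sublist (w.darts.map SimpleGraph.Dart.edge) := he
  obtain ⟨l, hl, hml⟩ := List.sublist_map_iff.mp he'
  obtain ⟨d₁, d₂, rfl⟩ : ∃ d₁ d₂, l = [d₁, d₂] := by
    cases l with
    | nil => simp at hml
    | cons d₁ l' =>
      cases l' with
      | nil => simp at hml
      | cons d₂ l'' =>
        cases l'' with
        | nil => exact ⟨d₁, d₂, rfl⟩
        | cons d₃ t => have := congrArg List.length hml; simp at this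
  have he12 : e = d₁.edge ∧ e = d₂.edge ∧ True := by simpa using hml
  have hdd : d₁.edge = d₂.edge := by rw [← he12.1, ← he12.2.1]
  have htlen : w.support.tail.length = w.length := by
    have h := w.length_support
    rw [w.support_eq_cons] at h
    simpa using h
  rcases (SimpleGraph.dart_edge_eq_iff d₁ d₂).mp hdd with rfl | rfl
  · have hsub : [d₁.snd, d₁.snd].Sublist w.support.tail := by
      have := hl.map (fun d => d.snd)
      simpa [Walk.map_snd_darts] using this
    exact (List.nodup_iff_sublist.mp hnd _) hsub
  · -- d₁ = d₂.symm
    have hab : d₂.snd ≠ d₂.fst := d₂.adj.ne'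
    have htne : w.support.tail ≠ [] := by
      intro h; rw [h] at htlen; simp at htlen; omega
    have hdrop : w.support.dropLast = v :: w.support.tail.dropLast := by
      conv_lhs => rw [w.support_eq_cons]
      exact List.dropLast_cons_of_ne_nil htne
    have hvlast : w.support.tail.getLast htne = v := by
      rw [List.getLast_tail]; exact w.getLast_support
    have hvnd : v ∉ w.support.tail.dropLast := by
      intro hv
      have hnd2 := hnd
      rw [← List.dropLast_append_getLast htne, List.nodup_append] at hnd2
      exact hnd2.2.2 _ hv _ (by simp [hvlast]) rfl
    have hfst : [d₂.snd, d₂.fst].Sublist w.support.dropLast := by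
      have := hl.map (fun d => d.fst)
      simpa [Walk.map_fst_darts] using this
    have hsnd : [d₂.fst, d₂.snd].Sublist w.support.tail := by
      have := hl.map (fun d => d.snd)
      simpa [Walk.map_snd_darts] using this
    rcases List.sublist_cons_iff.mp (hdrop ▸ hfst) with hfst' | ⟨r, hr, hrs⟩
    · exact aux_sublist_asymm hnd hab (hfst'.trans (List.dropLast_sublist _)) hsnd
    · obtain ⟨hav, rfl⟩ : d₂.snd = v ∧ r = [d₂.fst] :=
        ⟨(List.cons.injEq _ _ _ _ ▸ hr).1, ((List.cons.injEq _ _ _ _ ▸ hr).2).symm⟩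
      have hD : w.darts ≠ [] := by
        intro h
        have h2 := w.length_darts
        rw [h] at h2; simp at h2; omega
      have hd1mem : d₂.symm ∈ w.darts := hl.subset (by simp)
      have hd2mem : d₂ ∈ w.darts := hl.subset (by simp)
      have hmapfst : w.darts.map (fun d => d.fst) = v :: w.support.tail.dropLast := by
        rw [Walk.map_fst_darts, hdrop]
      have hmapsnd : w.darts.map (fun d => d.snd) = w.support.tail := Walk.map_snd_darts w
      -- d₂.symm is the first dart
      have hhead : d₂.symm = w.darts.head hD := by
        have hmem : d₂.symm ∈ w.darts.head hD :: w.darts.tail := by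
          rw [List.cons_head_tail]; exact hd1mem
        rcases List.mem_cons.mp hmem with h | h
        · exact h
        · exfalso
          apply hvnd
          have hv' : v ∈ w.darts.tail.map (fun d => d.fst) := by
            refine List.mem_map.mpr ⟨d₂.symm, h, ?_⟩
            exact hav
          rwa [List.map_tail, hmapfst] at hv'
      -- d₂ is the last dart
      have hlastd : d₂ = w.darts.getLast hD := by
        have hmem : d₂ ∈ w.darts.dropLast ++ [w.darts.getLast hD] := by
          rw [List.dropLast_append_getLast]; exact hd2mem
        rcases List.mem_append.mp hmem with h | h
        · exfalso
          apply hvnd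
          have hv' : v ∈ w.darts.dropLast.map (fun d => d.snd) := by
            refine List.mem_map.mpr ⟨d₂, h, hav⟩
          rw [List.map_dropLast, hmapsnd] at hv'
          exact hv'
        · simpa using h
      -- b = head of tail
      have hbhead : d₂.fst = w.support.tail.head htne := by
        have h1 : (w.darts.map (fun d => d.snd)).head (by simp [hD]) =
            w.support.tail.head htne := by
          congr 1
        rw [List.head_map] at h1
        rw [← h1, ← hhead]
        rfl
      -- b = last of tail.dropLast
      have hdlne : w.support.tail.dropLast ≠ [] := by
        intro h
        have := congrArg List.length h
        simp at this
        omega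
      have hblast : d₂.fst = w.support.tail.dropLast.getLast hdlne := by
        have h1 : (w.darts.map (fun d => d.fst)).getLast (by simp [hD]) =
            (v :: w.support.tail.dropLast).getLast (by simp) := by congr 1
        rw [List.getLast_map, List.getLast_cons hdlne] at h1
        rw [← h1, ← hlastd]
      -- contradiction: d₂.fst is both head of tail and an element of tail.tail
      have httne : w.support.tail.tail ≠ [] := by
        intro h
        have := congrArg List.length h
        simp at this
        omega
    -- tail = head :: tail.tail ; tail.dropLast = head :: tail.tail.dropLast
      have hdl2 : w.support.tail.dropLast = w.support.tail.head htne :: w.support.tail.tail.dropLast := by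
        conv_lhs => rw [← List.cons_head_tail htne]
        exact List.dropLast_cons_of_ne_nil httne
      have httdlne : w.support.tail.tail.dropLast ≠ [] := by
        intro h
        have := congrArg List.length h
        simp at this
        have h2 := congrArg List.length (List.cons_head_tail htne)
        simp at h2
        omega
      have hmem2 : d₂.fst ∈ w.support.tail.tail := by
        have h1 : w.support.tail.dropLast.getLast hdlne =
            (w.support.tail.head htne :: w.support.tail.tail.dropLast).getLast (by simp) := by
          congr 1
        have h2 : d₂.fst ∈ w.support.tail.tail.dropLast := by
          rw [hblast, h1, List.getLast_cons httdlne]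
          exact List.getLast_mem _
        exact (List.dropLast_sublist _).subset h2
      have hndc : w.support.tail.Nodup := hnd
      rw [← List.cons_head_tail htne, List.nodup_cons] at hndc
      exact hndc.1 (hbhead ▸ hmem2)


lemma aux_even_closed {V : Type*} {G : SimpleGraph V}
    (hc : ∀ (v : V) (c : G.Walk v v), c.IsCycle → Even c.length) :
    ∀ (n : ℕ) (v : V) (w : G.Walk v v), w.length = n → Even n := by
  classical
  intro n
  induction n using Nat.strong_induction_on with
  | _ n ih =>
    intro v w hw
    by_cases hcy : w.IsCycle
    · exact hw ▸ hc v w hcy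
    rcases Nat.lt_or_ge n 3 with h3 | h3
    · interval_cases n
      · exact Even.zero
      · exact absurd (Walk.adj_of_length_eq_one hw) (G.irrefl)
      · exact even_two
    · have hdup : ∃ x, List.Duplicate x w.support.tail := by
        by_contra hno
        rw [List.exists_duplicate_iff_not_nodup, not_not] at hno
        exact hcy ⟨⟨aux_isTrail (hw ▸ h3) hno, fun hnil => by simp [hnil] at hw; omega⟩, hno⟩
      obtain ⟨x, hx⟩ := hdup
      have hxs : x ∈ w.support := List.mem_of_mem_tail hx.mem
      have hlenrot : (w.rotate x hxs).length = n := by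
        have hperm := (w.rotate_darts x hxs).perm
        rw [← hw, ← Walk.length_darts, ← Walk.length_darts]
        exact hperm.length_eq
      have hcount : 2 ≤ (w.rotate x hxs).support.tail.count x := by
        rw [((w.support_rotate x hxs).perm).count_eq]
        exact List.duplicate_iff_two_le_count.mp hx
      have hnn : ¬ (w.rotate x hxs).Nil := by
        rw [Walk.not_nil_iff_lt_length, hlenrot]; omega
      obtain ⟨y, hadj, q, hq⟩ := Walk.not_nil_iff.mp hnn
      have hq2 : 2 ≤ q.support.count x := by
        rw [hq] at hcount
        simpa using hcount
      have hqx : x ∈ q.support := by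
        rw [← List.count_pos_iff]; omega
      have hspec := q.take_spec hqx
      have hsupp : q.support = (q.takeUntil x hqx).support ++ (q.dropUntil x hqx).support.tail := by
        conv_lhs => rw [← hspec]
        exact Walk.support_append _ _
      have hct : (q.takeUntil x hqx).support.count x = 1 := q.count_support_takeUntil_eq_one hqx
      have hd1 : 1 ≤ (q.dropUntil x hqx).support.tail.count x := by
        rw [hsupp, List.count_append] at hq2
        omega
      have hdlen : 1 ≤ (q.dropUntil x hqx).length := by
        by_contra hcon
        have h0 : (q.dropUntil x hqx).length = 0 := by omega
        rw [(Walk.length_eq_zero_iff.mp h0).eq_nil] at hd1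
        simp at hd1
      have hlq : 1 + (q.takeUntil x hqx).length + (q.dropUntil x hqx).length = n := by
        have := congrArg Walk.length hspec
        rw [Walk.length_append] at this
        rw [hq] at hlenrot
        simp [Walk.length_cons] at hlenrot
        omega
      have e1 : Even ((q.takeUntil x hqx).length + 1) :=
        ih _ (by omega) x (Walk.cons hadj (q.takeUntil x hqx)) (by simp)
      have e2 : Even ((q.dropUntil x hqx).length) := ih _ (by omega) x _ rfl
      rw [Nat.even_iff] at e1 e2 ⊢
      omega

lemma aux_colorable_two {V : Type*} {G : SimpleGraph V}
    (hec : ∀ (v : V) (w : G.Walk v v), Even w.length) : G.Colorable 2 := by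
  classical
  have key : ∀ (r u v : V) (_ : G.Adj u v) (p : G.Walk r u) (q : G.Walk r v),
      ¬ (Odd p.length ↔ Odd q.length) := by
    intro r u v hadj p q hiff
    have hw := hec r ((p.append (Walk.cons hadj Walk.nil)).append q.reverse)
    rw [Walk.length_append, Walk.length_append] at hw
    simp only [Walk.length_cons, Walk.length_nil, Walk.length_reverse] at hw
    rcases Nat.even_or_odd p.length with hp | hp
    · have hq : ¬ Odd q.length := fun h => (Nat.not_odd_iff_even.mpr hp) (hiff.mpr h)
      rw [Nat.even_iff] at hw hp
      rw [Nat.not_odd_iff_even, Nat.even_iff] at hq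
      omega
    · have hq : Odd q.length := hiff.mp hp
      rw [Nat.even_iff] at hw
      rw [Nat.odd_iff] at hp hq
      omega
  let root : V → V := fun v => (G.connectedComponentMk v).out
  have hreach : ∀ v, G.Reachable (root v) v := fun v =>
    ConnectedComponent.exact (Quot.out_eq _)
  let col : V → Bool := fun v => decide (∃ p : G.Walk (root v) v, Odd p.length)
  have hvalid : ∀ {u v : V}, G.Adj u v → col u ≠ col v := by
    intro u v hadj heq
    have hroot : root u = root v := by
      have h : G.connectedComponentMk u = G.connectedComponentMk v :=
        ConnectedComponent.sound hadj.reachable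
      simp only [root, h]
    simp only [col, decide_eq_decide] at heq
    obtain ⟨p⟩ := hreach u
    obtain ⟨q0⟩ := hreach v
    by_cases hu : ∃ p : G.Walk (root u) u, Odd p.length
    · obtain ⟨p', hp'⟩ := hu
      obtain ⟨q', hq'⟩ := heq.mp ⟨p', hp'⟩
      exact key (root u) u v hadj p' (q'.copy hroot.symm rfl)
        (by rw [Walk.length_copy]; exact iff_of_true hp' hq')
    · have hv : ¬ ∃ q : G.Walk (root v) v, Odd q.length := fun h => hu (heq.mpr h)
      push_neg at hu hv
      exact key (root u) u v hadj p (q0.copy hroot.symm rfl)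
        (iff_of_false (hu p) (by rw [Walk.length_copy]; exact hv q0))
  have hcard : Fintype.card Bool = 2 := by simp
  exact hcard ▸ (Coloring.mk col @hvalid).colorable

lemma aux_two_le_length {V : Type*} {G : SimpleGraph V} {x y : V} (p : G.Walk x y)
    (hxy : x ≠ y) (hnadj : ¬ G.Adj x y) : 2 ≤ p.length := by
  match p with
  | Walk.nil => exact absurd rfl hxy
  | Walk.cons h Walk.nil => exact absurd h hnadj
  | Walk.cons h (Walk.cons h' p') => simp only [Walk.length_cons]; omega

lemma aux_diamond_copy {V : Type*} {G : SimpleGraph V} {a b c d : V}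
    (hab : G.Adj a b) (hac : G.Adj a c) (had : G.Adj a d) (hbc : G.Adj b c)
    (hbd : G.Adj b d) (hcd : c ≠ d) : HasSubgraphCopy diamond G := by
  have h1 : a ≠ b := hab.ne
  have h2 : a ≠ c := hac.ne
  have h3 : a ≠ d := had.ne
  have h4 : b ≠ c := hbc.ne
  have h5 : b ≠ d := hbd.ne
  let f : Fin 4 → V := fun i => match i with | 0 => a | 1 => b | 2 => c | 3 => d
  refine ⟨⟨f, ?_⟩, ?_⟩
  · intro i j hij
    simp only [diamond, fromEdgeSet_adj, Set.mem_insert_iff, Set.mem_singleton_iff,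
      Sym2.eq_iff] at hij
    obtain ⟨h, -⟩ := hij
    rcases h with (⟨rfl,rfl⟩|⟨rfl,rfl⟩)|(⟨rfl,rfl⟩|⟨rfl,rfl⟩)|(⟨rfl,rfl⟩|⟨rfl,rfl⟩)|(⟨rfl,rfl⟩|⟨rfl,rfl⟩)|(⟨rfl,rfl⟩|⟨rfl,rfl⟩)
    · exact hab
    · exact hab.symm
    · exact hac
    · exact hac.symm
    · exact had
    · exact had.symm
    · exact hbc
    · exact hbc.symm
    · exact hbd
    · exact hbd.symm
  · intro i j hf
    fin_cases i <;> fin_cases j <;>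
      first
        | rfl
        | exact absurd hf h1 | exact absurd hf.symm h1
        | exact absurd hf h2 | exact absurd hf.symm h2
        | exact absurd hf h3 | exact absurd hf.symm h3
        | exact absurd hf h4 | exact absurd hf.symm h4
        | exact absurd hf h5 | exact absurd hf.symm h5
        | exact absurd hf hcd | exact absurd hf.symm hcd

lemma aux_cycle_con {V : Type*} {G : SimpleGraph V}
    (hhole : ∀ (v : V) (c : G.Walk v v), c.IsCycle → c.length < 5)
    {a x y z : V} (hax : G.Adj a x) (hyz : G.Adj y z) (hza : G.Adj z a)
    (P : G.Walk x y) (hP : P.IsPath) (haP : a ∉ P.support) (hzP : z ∉ P.support)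
    (hlen : 2 ≤ P.length) (hxz : x ≠ z) : False := by
  classical
  let Q : G.Walk x a := P.append (Walk.cons hyz (Walk.cons hza Walk.nil))
  have hQsupp : Q.support = P.support ++ [z, a] := by
    simp only [Q, Walk.support_append, Walk.support_cons, Walk.support_nil]
    rfl
  have hQpath : Q.IsPath := by
    rw [Walk.isPath_def, hQsupp, List.nodup_append]
    refine ⟨hP.support_nodup, by simp [hza.ne], ?_⟩
    intro t ht u htz rfl
    simp only [List.mem_cons, List.mem_singleton, List.not_mem_nil, or_false] at htz
    rcases htz with rfl | rfl
    · exact hzP ht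
    · exact haP ht
  have hedge : s(a, x) ∉ Q.edges := by
    intro hmem
    simp only [Q, Walk.edges_append, Walk.edges_cons, Walk.edges_nil, List.mem_append,
      List.mem_cons, List.mem_singleton, List.not_mem_nil, or_false] at hmem
    rcases hmem with h | h | h
    · exact haP (P.fst_mem_support_of_mem_edges h)
    · rw [Sym2.eq_iff] at h
      rcases h with ⟨rfl, rfl⟩ | ⟨rfl, rfl⟩
      · exact hxz rfl
      · exact hza.ne rfl
    · rw [Sym2.eq_iff] at h
      rcases h with ⟨rfl, rfl⟩ | ⟨-, rfl⟩
      · exact hza.ne rfl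
      · exact hxz rfl
  have hcyc : (Walk.cons hax Q).IsCycle := (Walk.cons_isCycle_iff Q hax).mpr ⟨hQpath, hedge⟩
  have hlt := hhole a (Walk.cons hax Q) hcyc
  have : (Walk.cons hax Q).length = P.length + 3 := by
    simp [Q, Walk.length_cons, Walk.length_append]
  omega

lemma aux_no_outside_neighbor {V : Type*} {G : SimpleGraph V}
    (hhole : ∀ (v : V) (c : G.Walk v v), c.IsCycle → c.length < 5)
    (hdiamond : ¬ HasSubgraphCopy diamond G)
    {H : G.Subgraph} (h2 : ∀ v ∈ H.verts, (H.deleteVerts {v}).Connected)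
    {a b c x : V} (hab : H.Adj a b) (hbc : H.Adj b c) (hac : H.Adj a c)
    (hax : H.Adj a x) (hxb : x ≠ b) (hxc : x ≠ c) : False := by
  classical
  have gab := hab.adj_sub
  have gbc := hbc.adj_sub
  have gac := hac.adj_sub
  have gax := hax.adj_sub
  have hgxb : ¬ G.Adj x b := fun h =>
    hdiamond (aux_diamond_copy gab gac gax gbc h.symm (Ne.symm hxc))
  have hgxc : ¬ G.Adj x c := fun h =>
    hdiamond (aux_diamond_copy gac gab gax gbc.symm h.symm (Ne.symm hxb))
  have ha : a ∈ H.verts := hab.fst_mem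
  have hbv : b ∈ H.verts := hab.snd_mem
  have hxv : x ∈ H.verts := hax.snd_mem
  have hxa : x ≠ a := gax.ne'
  have hconn := h2 a ha
  have hx' : x ∈ (H.deleteVerts {a}).verts := by
    rw [Subgraph.deleteVerts_verts]; exact ⟨hxv, by simp [hxa]⟩
  have hb' : b ∈ (H.deleteVerts {a}).verts := by
    rw [Subgraph.deleteVerts_verts]; exact ⟨hbv, by simp [gab.ne']⟩
  obtain ⟨W⟩ := hconn ⟨x, hx'⟩ ⟨b, hb'⟩
  let W' : G.Walk x b := W.map (Subgraph.hom _)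
  have haW : a ∉ W'.support := by
    intro hmem
    rw [show W'.support = _ from Walk.support_map _ _] at hmem
    obtain ⟨s, hs, hsa⟩ := List.mem_map.mp hmem
    have hsv := (Set.ext_iff.mp Subgraph.deleteVerts_verts (s : V)).mp s.2
    have hse : (s : V) = a := hsa
    exact hsv.2 (by simp [hse])
  let P := W'.toPath
  have hPp : (↑P : G.Walk x b).IsPath := P.2
  have haP : a ∉ (↑P : G.Walk x b).support := fun h => haW (W'.support_toPath_subset h)
  have hlen : 2 ≤ (↑P : G.Walk x b).length := aux_two_le_length _ hxb hgxb
  by_cases hcP : c ∈ (↑P : G.Walk x b).support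
  · have hP₁ : ((↑P : G.Walk x b).takeUntil c hcP).IsPath := hPp.takeUntil hcP
    have haP₁ : a ∉ ((↑P : G.Walk x b).takeUntil c hcP).support := fun h =>
      haP (Walk.support_takeUntil_subset _ hcP h)
    have hbP₁ : b ∉ ((↑P : G.Walk x b).takeUntil c hcP).support := by
      intro hb1
      have hnd := hPp.support_nodup
      have hsupp : (↑P : G.Walk x b).support =
          ((↑P : G.Walk x b).takeUntil c hcP).support ++
            ((↑P : G.Walk x b).dropUntil c hcP).support.tail := by
        conv_lhs => rw [← (↑P : G.Walk x b).take_spec hcP]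
        exact Walk.support_append _ _
      rw [hsupp, List.nodup_append] at hnd
      refine hnd.2.2 b hb1 b ?_ rfl
      have hbend : b ∈ ((↑P : G.Walk x b).dropUntil c hcP).support := Walk.end_mem_support _
      rw [Walk.support_eq_cons] at hbend
      rcases List.mem_cons.mp hbend with h | h
      · exact absurd h gbc.ne
      · exact h
    have hlen₁ : 2 ≤ ((↑P : G.Walk x b).takeUntil c hcP).length :=
      aux_two_le_length _ hxc hgxc
    exact aux_cycle_con hhole gax gbc.symm gab.symm _ hP₁ haP₁ hbP₁ hlen₁ hxb
  · exact aux_cycle_con hhole gax gbc gac.symm (↑P) hPp haP hcP hlen hxc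

lemma aux_tri_of_three {V : Type*} {G : SimpleGraph V} {v : V} (c : G.Walk v v)
    (h : c.length = 3) : ∃ a b, G.Adj v a ∧ G.Adj a b ∧ G.Adj b v := by
  cases c with
  | nil => simp at h
  | cons h1 p =>
    cases p with
    | nil => simp at h
    | cons h2 p2 =>
      cases p2 with
      | nil => simp at h
      | cons h3 p3 =>
        cases p3 with
        | nil => exact ⟨_, _, h1, h2, h3⟩
        | cons h4 p4 => simp [Walk.length_cons] at h

end AuxHHDD

open SimpleGraph

/-- If a finite graph contains no house, no hole (cycle of length at least 5),
no domino and no diamond as a subgraph, then every block (maximal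
2-vertex-connected subgraph) of `G` is bipartite or a triangle. -/
theorem blocks_bipartite_or_triangle_of_HHDD_free
    {V : Type*} [Fintype V] (G : SimpleGraph V)
    (hhouse : ¬ HasSubgraphCopy house G)
    (hhole : ∀ (v : V) (c : G.Walk v v), c.IsCycle → c.length < 5)
    (hdomino : ¬ HasSubgraphCopy domino G)
    (hdiamond : ¬ HasSubgraphCopy diamond G) :
    ∀ H : G.Subgraph, IsBlock H →
      (H.coe.Colorable 2 ∨ IsTriangleSubgraph H) := by
  classical
  intro H hH
  obtain ⟨⟨hconn, hdel⟩, -⟩ := hH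
  by_cases htri : ∃ a b c : V, H.Adj a b ∧ H.Adj b c ∧ H.Adj a c
  · right
    obtain ⟨a, b, c, hab, hbc, hac⟩ := htri
    refine ⟨a, b, c, hab.adj_sub.ne, hac.adj_sub.ne, hbc.adj_sub.ne, ?_, hab, hbc, hac⟩
    apply Set.Subset.antisymm
    · intro v0 hv0
      by_contra hout
      simp only [Set.mem_insert_iff, Set.mem_singleton_iff, not_or] at hout
      obtain ⟨hna, hnb, hnc⟩ := hout
      obtain ⟨W⟩ := hconn ⟨v0, hv0⟩ ⟨a, hab.fst_mem⟩
      obtain ⟨d, hd, hdS, hdS'⟩ := W.exists_boundary_dart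
        {s : H.verts | (s : V) ∉ ({a, b, c} : Set V)}
        (by simp [hna, hnb, hnc]) (by simp)
      have hadj : H.Adj (↑d.toProd.2) (↑d.toProd.1) := d.adj.symm
      have hin : (↑d.toProd.2 : V) ∈ ({a, b, c} : Set V) := by
        by_contra hcon
        exact hdS' hcon
      have h1 : (↑d.toProd.1 : V) ∉ ({a, b, c} : Set V) := hdS
      simp only [Set.mem_insert_iff, Set.mem_singleton_iff] at hin h1
      push_neg at h1
      rcases hin with h | h | h
      · exact aux_no_outside_neighbor hhole hdiamond hdel hab hbc hac
          (h ▸ hadj) h1.2.1 h1.2.2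
      · exact aux_no_outside_neighbor hhole hdiamond hdel hab.symm hac hbc
          (h ▸ hadj) h1.1 h1.2.2
      · exact aux_no_outside_neighbor hhole hdiamond hdel hac.symm hab hbc.symm
          (h ▸ hadj) h1.1 h1.2.1
    · intro v0 hv0
      simp only [Set.mem_insert_iff, Set.mem_singleton_iff] at hv0
      rcases hv0 with rfl | rfl | rfl
      · exact hab.fst_mem
      · exact hab.snd_mem
      · exact hbc.snd_mem
  · left
    have hinj : Function.Injective (Subgraph.hom H) := fun s t hst => Subtype.coe_injective hst
    have heven : ∀ (v : ↥H.verts) (c : H.coe.Walk v v), c.IsCycle → Even c.length := by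
      intro v0 cyc hcyc
      have hm := hcyc.map (f := Subgraph.hom H) hinj
      have hlt := hhole _ _ hm
      rw [Walk.length_map] at hlt
      have h3 := hcyc.three_le_length
      rcases Nat.lt_or_ge cyc.length 4 with h4 | h4
      · exfalso
        have hlen3 : cyc.length = 3 := by omega
        obtain ⟨a1, b1, h1, h2', h3'⟩ := aux_tri_of_three cyc hlen3
        exact htri ⟨↑v0, ↑a1, ↑b1, h1, h2', h3'.symm⟩
      · have h4' : cyc.length = 4 := by omega
        rw [h4']; decide
    have hall : ∀ (v : ↥H.verts) (w : H.coe.Walk v v), Even w.length :=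
      fun v w => aux_even_closed heven w.length v w rfl
    exact aux_colorable_two hall
end
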